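/- arXiv:1503.01277 — 8 statements merged into one kernel-verified Lean document; each statement's English description precedes it below -/
import Mathlib

section
/- Let 0 < ε < ω, let K ∈ L¹([−ε,ε]) with ‖K‖_{L¹} = 1, let a ∈ [0,1], let ρ = β + iγ with 0 ≤ β ≤ 1 and γ ∈ ℝ \ {0}, and let k ≥ 1 be an integer. Set Φ_{ω,ρ,a} = ∫_{ω−ε}^{ω+ε} K(y−ω)·y·e^{(1/2−a)y}·Eit((a−ρ)y) dy and, for j ≥ 1, F_{ω,ρ}^{(−j)}(0) = (−1)^j ∫_{ω−ε}^{ω+ε} y^{1−j} K(y−ω) e^{(1/2−ρ)y} dy. Then | Φ_{ω,ρ,a} − ∑_{j=1}^k (j−1)!·F_{ω,ρ}^{(−j)}(0)/(ρ−a)^j | ≤ k!·e^{ε/2}·e^{(1/2−β)ω} / ( (ω−ε)^k · |γ|^{k+1} ). -/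
open scoped BigOperators

open MeasureTheory Set Complex Filter

noncomputable def Eit (z : ℂ) : ℂ :=
  ∫ t in Set.Ioi (0 : ℝ), Complex.exp (z - t) / (z - t)

noncomputable def Jfun (z : ℂ) (m : ℕ) : ℂ :=
  ∫ t in Set.Ioi (0 : ℝ), Complex.exp (z - t) * (z - t) ^ (-(m : ℤ))

lemma zsub_ne (z : ℂ) (hz : z.im ≠ 0) (t : ℝ) : z - (t : ℂ) ≠ 0 := by
  intro h
  apply hz
  have := congrArg Complex.im h
  simpa using this

lemma norm_term_le (z : ℂ) (hz : z.im ≠ 0) (m : ℕ) (t : ℝ) :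
    ‖Complex.exp (z - t) * (z - t) ^ (-(m : ℤ))‖ ≤
      Real.exp (z.re - t) * (|z.im| ^ m)⁻¹ := by
  rw [norm_mul, Complex.norm_exp]
  have hre : (z - (t:ℂ)).re = z.re - t := by simp
  rw [hre]
  gcongr
  rw [norm_zpow, zpow_neg, zpow_natCast]
  have h1 : |z.im| ≤ ‖z - (t:ℂ)‖ := by
    have : (z - (t:ℂ)).im = z.im := by simp
    simpa [this] using Complex.abs_im_le_norm (z - (t:ℂ))
  have h2 : (0:ℝ) < |z.im| := abs_pos.2 hz
  exact inv_anti₀ (pow_pos h2 m) (pow_le_pow_left₀ h2.le h1 m)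

lemma continuous_term (z : ℂ) (hz : z.im ≠ 0) (m : ℕ) :
    Continuous (fun t : ℝ => Complex.exp (z - t) * (z - t) ^ (-(m : ℤ))) := by
  have hsub : Continuous (fun t : ℝ => z - (t : ℂ)) := by
    exact continuous_const.sub Complex.continuous_ofReal
  exact (Complex.continuous_exp.comp hsub).mul
    (hsub.zpow₀ _ (fun t => Or.inl (zsub_ne z hz t)))

lemma integrable_term (z : ℂ) (hz : z.im ≠ 0) (m : ℕ) :
    IntegrableOn (fun t : ℝ => Complex.exp (z - t) * (z - t) ^ (-(m : ℤ)))
      (Set.Ioi (0:ℝ)) := by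
  apply Integrable.mono'
    (g := fun t => (Real.exp z.re * (|z.im| ^ m)⁻¹) * Real.exp (-(1:ℝ) * t))
  · exact ((exp_neg_integrableOn_Ioi 0 one_pos).const_mul _)
  · exact (continuous_term z hz m).aestronglyMeasurable.restrict
  · filter_upwards with t
    have := norm_term_le z hz m t
    calc ‖Complex.exp (z - t) * (z - t) ^ (-(m : ℤ))‖
        ≤ Real.exp (z.re - t) * (|z.im| ^ m)⁻¹ := this
      _ = Real.exp z.re * (|z.im| ^ m)⁻¹ * Real.exp (-(1:ℝ) * t) := by
          rw [sub_eq_add_neg, Real.exp_add]; ring_nf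

lemma hasDerivAt_term (z : ℂ) (hz : z.im ≠ 0) (m : ℕ) (t : ℝ) :
    HasDerivAt (fun t : ℝ => Complex.exp (z - t) * (z - t) ^ (-(m : ℤ)))
      (-(Complex.exp (z - t) * (z - t) ^ (-(m : ℤ)))
        + (m : ℂ) * (Complex.exp (z - t) * (z - t) ^ (-((m:ℕ)+1 : ℤ)))) t := by
  have hne := zsub_ne z hz t
  have h1 : HasDerivAt (fun w : ℂ => z - w) (-1) (t : ℂ) := by
    simpa using (hasDerivAt_id (t:ℂ)).const_sub z
  have h2 : HasDerivAt (fun w : ℂ => Complex.exp (z - w)) (Complex.exp (z - t) * -1) t :=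
    (Complex.hasDerivAt_exp (z - t)).comp _ h1
  have h3 : HasDerivAt (fun w : ℂ => (z - w) ^ (-(m : ℤ)))
      (((-(m:ℤ) : ℤ) : ℂ) * (z - t) ^ (-(m:ℤ) - 1) * -1) t :=
    (hasDerivAt_zpow (-(m:ℤ)) _ (Or.inl hne)).comp _ h1
  have h4 := (h2.mul h3).comp_ofReal (z := t)
  convert h4 using 1
  · rfl
  have : -(m:ℤ) - 1 = -((m:ℕ)+1 : ℤ) := by push_cast; ring
  rw [this]
  push_cast
  ring

lemma tendsto_term (z : ℂ) (hz : z.im ≠ 0) (m : ℕ) :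
    Tendsto (fun t : ℝ => Complex.exp (z - t) * (z - t) ^ (-(m : ℤ))) atTop (nhds 0) := by
  apply squeeze_zero_norm (fun t => norm_term_le z hz m t)
  have h : Tendsto (fun t : ℝ => Real.exp (z.re - t)) atTop (nhds 0) := by
    apply Real.tendsto_exp_atBot.comp
    exact (tendsto_atBot_add_const_left atTop z.re tendsto_neg_atTop_atBot).congr
      (fun t => by ring)
  simpa using h.mul_const (|z.im| ^ m)⁻¹

lemma Jfun_rec (z : ℂ) (hz : z.im ≠ 0) (m : ℕ) :
    Jfun z m = Complex.exp z * z ^ (-(m:ℤ)) + (m : ℂ) * Jfun z (m+1) := by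
  have hfeq : (fun t : ℝ => -(Complex.exp (z - t) * (z - t) ^ (-(m : ℤ)))
        + (m : ℂ) * (Complex.exp (z - t) * (z - t) ^ (-((m:ℕ)+1 : ℤ))))
      = fun t : ℝ => (m : ℂ) * (Complex.exp (z - t) * (z - t) ^ (-((m+1 : ℕ) : ℤ)))
        - Complex.exp (z - t) * (z - t) ^ (-(m : ℤ)) := by
    funext t; push_cast; ring
  have key := integral_Ioi_of_hasDerivAt_of_tendsto'
    (f := fun t : ℝ => Complex.exp (z - t) * (z - t) ^ (-(m : ℤ)))
    (f' := fun t : ℝ => -(Complex.exp (z - t) * (z - t) ^ (-(m : ℤ)))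
        + (m : ℂ) * (Complex.exp (z - t) * (z - t) ^ (-((m:ℕ)+1 : ℤ))))
    (a := 0) (m := 0)
    (fun x _ => hasDerivAt_term z hz m x)
    ?_ (tendsto_term z hz m)
  · rw [hfeq, integral_sub ((integrable_term z hz (m+1)).const_mul _) (integrable_term z hz m),
      integral_const_mul] at key
    simp only [Complex.ofReal_zero, sub_zero] at key
    have e : (m : ℂ) * Jfun z (m+1) - Jfun z m = 0 - Complex.exp z * z ^ (-(m:ℤ)) := key
    linear_combination -e
  · rw [hfeq]
    exact ((integrable_term z hz (m+1)).const_mul _).sub (integrable_term z hz m)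

lemma norm_Jfun_le (z : ℂ) (hz : z.im ≠ 0) (m : ℕ) :
    ‖Jfun z m‖ ≤ Real.exp z.re * (|z.im| ^ m)⁻¹ := by
  refine (norm_integral_le_integral_norm _).trans ?_
  have h1 : (∫ t in Set.Ioi (0:ℝ), ‖Complex.exp (z - t) * (z - t) ^ (-(m : ℤ))‖)
      ≤ ∫ t in Set.Ioi (0:ℝ), Real.exp (z.re - t) * (|z.im| ^ m)⁻¹ := by
    apply integral_mono (integrable_term z hz m).norm
    · apply Integrable.mul_const
      apply Integrable.mono' (g := fun t : ℝ => Real.exp z.re * Real.exp (-(1:ℝ) * t))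
      · exact (exp_neg_integrableOn_Ioi 0 one_pos).const_mul _
      · exact (Real.continuous_exp.comp (continuous_const.sub continuous_id)).aestronglyMeasurable.restrict
      · filter_upwards with t
        rw [Real.norm_eq_abs, abs_of_pos (Real.exp_pos _), sub_eq_add_neg, Real.exp_add]
        simp
    · exact fun t => norm_term_le z hz m t
  refine h1.trans_eq ?_
  rw [integral_mul_const]
  have : (∫ t in Set.Ioi (0:ℝ), Real.exp (z.re - t)) = Real.exp z.re := by
    have : (fun t : ℝ => Real.exp (z.re - t)) = fun t => Real.exp z.re * Real.exp (-t) := by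
      funext t; rw [sub_eq_add_neg, Real.exp_add]
    rw [this, integral_const_mul, integral_exp_neg_Ioi_zero, mul_one]
  rw [this]

lemma Jfun_expand (z : ℂ) (hz : z.im ≠ 0) (k : ℕ) :
    Jfun z 1 = Complex.exp z * (∑ j ∈ Finset.Icc 1 k, ((j-1).factorial : ℂ) * z ^ (-(j:ℤ)))
      + (k.factorial : ℂ) * Jfun z (k+1) := by
  induction k with
  | zero => simp
  | succ k ih =>
    rw [ih, Jfun_rec z hz (k+1), Finset.sum_Icc_succ_top (Nat.one_le_iff_ne_zero.mpr (Nat.succ_ne_zero k))]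
    have h1 : ((k+1-1).factorial : ℂ) = (k.factorial : ℂ) := by norm_num
    have h2 : ((k+1).factorial : ℂ) = (k.factorial : ℂ) * ((k:ℂ)+1) := by
      rw [Nat.factorial_succ]; push_cast; ring
    rw [h1, h2]
    push_cast
    ring

lemma Eit_eq_Jfun (z : ℂ) : Eit z = Jfun z 1 := by
  unfold Eit Jfun
  congr 1
  funext t
  rw [zpow_neg]
  norm_num [div_eq_mul_inv]

lemma Eit_sub_expand (z : ℂ) (hz : z.im ≠ 0) (k : ℕ) :
    ‖Eit z - Complex.exp z * ∑ j ∈ Finset.Icc 1 k, ((j-1).factorial : ℂ) * z ^ (-(j:ℤ))‖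
      ≤ (k.factorial : ℝ) * (Real.exp z.re * (|z.im| ^ (k+1))⁻¹) := by
  rw [Eit_eq_Jfun, Jfun_expand z hz k, add_sub_cancel_left, norm_mul]
  have h : ‖((k.factorial : ℕ) : ℂ)‖ = (k.factorial : ℝ) := by
    rw [Complex.norm_natCast]
  rw [h]
  exact mul_le_mul_of_nonneg_left (norm_Jfun_le z hz (k+1)) (by positivity)

lemma continuousAt_Eit_mul (c : ℂ) (hc : c.im ≠ 0) {y₀ : ℝ} (hy : 0 < y₀) :
    ContinuousAt (fun y : ℝ => Eit (c * y)) y₀ := by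
  have hmem : Set.Ioo (y₀/2) (2*y₀) ∈ nhds y₀ := Ioo_mem_nhds (by linarith) (by linarith)
  have him : ∀ y : ℝ, y ∈ Set.Ioo (y₀/2) (2*y₀) → (c * y).im ≠ 0 := by
    intro y hy'
    have h : (c * (y:ℂ)).im = c.im * y := by simp [Complex.mul_im]
    rw [h]
    exact mul_ne_zero hc (by nlinarith [hy'.1])
  apply MeasureTheory.continuousAt_of_dominated
    (bound := fun t => Real.exp (|c.re| * (2*y₀)) * Real.exp (-t) / (|c.im| * (y₀/2)))
  · filter_upwards [hmem] with y hy'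
    have h1 : Continuous (fun t : ℝ => c * y - (t : ℂ)) :=
      continuous_const.sub Complex.continuous_ofReal
    have h2 : ∀ t : ℝ, c * (y:ℂ) - (t:ℂ) ≠ 0 := fun t => zsub_ne _ (him y hy') t
    exact ((Complex.continuous_exp.comp h1).div h1 h2).aestronglyMeasurable.restrict
  · filter_upwards [hmem] with y hy'
    filter_upwards with t
    have hne : c * (y:ℂ) - (t:ℂ) ≠ 0 := zsub_ne _ (him y hy') t
    rw [norm_div, Complex.norm_exp]
    have hre : (c * (y:ℂ) - (t:ℂ)).re = c.re * y - t := by simp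
    rw [hre]
    have hden : |c.im| * (y₀/2) ≤ ‖c * (y:ℂ) - (t:ℂ)‖ := by
      have h3 : (c * (y:ℂ) - (t:ℂ)).im = c.im * y := by simp
      have h4 : |c.im * y| ≤ ‖c * (y:ℂ) - (t:ℂ)‖ := by
        rw [← h3]; exact Complex.abs_im_le_norm _
      have h5 : |c.im| * (y₀/2) ≤ |c.im * y| := by
        rw [abs_mul]
        have : |y| = y := abs_of_pos (by nlinarith [hy'.1])
        rw [this]
        have := hy'.1
        nlinarith [abs_nonneg c.im, abs_pos.2 hc]
      linarith
    have hnum : Real.exp (c.re * y - t) ≤ Real.exp (|c.re| * (2*y₀)) * Real.exp (-t) := by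
      rw [← Real.exp_add]
      apply Real.exp_le_exp.2
      have h6 : c.re * y ≤ |c.re| * (2*y₀) := by
        calc c.re * y ≤ |c.re * y| := le_abs_self _
          _ = |c.re| * |y| := abs_mul _ _
          _ ≤ |c.re| * (2*y₀) := by
              apply mul_le_mul_of_nonneg_left _ (abs_nonneg _)
              rw [abs_of_pos (by nlinarith [hy'.1] : (0:ℝ) < y)]
              linarith [hy'.2]
      linarith
    exact div_le_div₀ (by positivity) hnum (mul_pos (abs_pos.2 hc) (by linarith)) hden
  · apply Integrable.div_const
    have hi : IntegrableOn (fun t : ℝ => Real.exp (-t)) (Set.Ioi (0:ℝ)) := by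
      simpa using exp_neg_integrableOn_Ioi 0 one_pos
    exact hi.const_mul _
  · filter_upwards with t
    have hne : c * ((y₀:ℝ):ℂ) - (t:ℂ) ≠ 0 := zsub_ne _ (by
      have h : (c * ((y₀:ℝ):ℂ)).im = c.im * y₀ := by simp [Complex.mul_im]
      rw [h]; exact mul_ne_zero hc (ne_of_gt hy)) t
    have h1 : ContinuousAt (fun y : ℝ => c * (y:ℂ) - (t:ℂ)) y₀ := by
      exact ((continuous_const.mul Complex.continuous_ofReal).sub continuous_const).continuousAt
    exact (Complex.continuous_exp.continuousAt.comp h1).div h1 hne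

lemma pointwise_term (a : ℝ) (ρ : ℂ) (j : ℕ) (Kv y : ℝ) (hy : 0 < y) :
    ((Kv * y * Real.exp ((1/2 - a) * y) : ℝ) : ℂ) *
        (Complex.exp (((a:ℂ) - ρ) * y) *
          (((j-1).factorial : ℂ) * ((((a:ℂ) - ρ)) * y) ^ (-(j:ℤ))))
      = (((j-1).factorial : ℂ) * (-1:ℂ)^j / (ρ - (a:ℂ))^j) *
        ((y:ℂ) ^ ((1:ℤ) - (j:ℤ)) * ((Kv:ℝ):ℂ) * Complex.exp ((1/2 - ρ) * y)) := by
  have hyne : (y:ℂ) ≠ 0 := Complex.ofReal_ne_zero.2 hy.ne'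
  have hexp : Complex.exp (((1/2 - a) * y : ℝ) : ℂ) * Complex.exp (((a:ℂ) - ρ) * y)
      = Complex.exp ((1/2 - ρ) * y) := by
    rw [← Complex.exp_add]; congr 1; push_cast; ring
  have hz : ((((a:ℂ) - ρ)) * y) ^ (-(j:ℤ)) = ((a:ℂ) - ρ) ^ (-(j:ℤ)) * (y:ℂ) ^ (-(j:ℤ)) :=
    mul_zpow _ _ _
  have hy1 : (y:ℂ) ^ ((1:ℤ) - (j:ℤ)) = (y:ℂ) * (y:ℂ) ^ (-(j:ℤ)) := by
    rw [sub_eq_add_neg, zpow_add₀ hyne, zpow_one]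
  have hcpow : ((a:ℂ) - ρ) ^ (-(j:ℤ)) = (-1:ℂ)^j / (ρ - (a:ℂ))^j := by
    rw [zpow_neg, zpow_natCast, show (a:ℂ) - ρ = -(ρ - (a:ℂ)) by ring, neg_pow]
    rw [mul_inv, ← inv_pow, inv_neg, inv_one]
    ring
  rw [hz, hy1, hcpow]
  push_cast
  push_cast at hexp
  linear_combination ((Kv:ℂ) * y * ((j-1).factorial : ℂ) *
    ((-1:ℂ)^j / (ρ - (a:ℂ))^j) * (y:ℂ) ^ (-(j:ℤ))) * hexp

lemma scalar_bound (ε ω β γ y : ℝ) (a : ℝ) (k : ℕ)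
    (hε : 0 < ε) (hεω : ε < ω) (hβ0 : 0 ≤ β) (hβ1 : β ≤ 1) (hγ : γ ≠ 0)
    (hy1 : ω - ε ≤ y) (hy2 : y ≤ ω + ε) :
    y * Real.exp ((1/2 - a) * y) *
        ((k.factorial:ℝ) * (Real.exp ((a - β) * y) * ((|γ| * y)^(k+1))⁻¹))
      ≤ (k.factorial:ℝ) * Real.exp (ε/2) * Real.exp ((1/2 - β)*ω)
          / ((ω-ε)^k * |γ|^(k+1)) := by
  have hy0 : 0 < y := by linarith
  have hγ0 : 0 < |γ| := abs_pos.2 hγ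
  have hlhs : y * Real.exp ((1/2 - a) * y) *
        ((k.factorial:ℝ) * (Real.exp ((a - β) * y) * ((|γ| * y)^(k+1))⁻¹))
      = ((k.factorial:ℝ) * Real.exp ((1/2 - β) * y)) / (|γ|^(k+1) * y^k) := by
    have hexp2 : Real.exp ((1/2 - a) * y) * Real.exp ((a - β) * y)
        = Real.exp ((1/2 - β) * y) := by
      rw [← Real.exp_add]; congr 1; ring
    rw [mul_pow, pow_succ, ← hexp2]
    field_simp
    ring
  rw [hlhs]
  have hnum : (k.factorial:ℝ) * Real.exp ((1/2 - β) * y)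
      ≤ (k.factorial:ℝ) * (Real.exp (ε/2) * Real.exp ((1/2 - β)*ω)) := by
    apply mul_le_mul_of_nonneg_left _ (by positivity)
    rw [← Real.exp_add]
    apply Real.exp_le_exp.2
    have e1 : (0:ℝ) ≤ (1/2 - (1/2 - β)) * (ε + (y - ω)) := mul_nonneg (by linarith) (by linarith)
    have e2 : (0:ℝ) ≤ (1/2 + (1/2 - β)) * (ε - (y - ω)) := mul_nonneg (by linarith) (by linarith)
    nlinarith [e1, e2]
  have hden : |γ|^(k+1) * (ω-ε)^k ≤ |γ|^(k+1) * y^k := by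
    apply mul_le_mul_of_nonneg_left _ (by positivity)
    exact pow_le_pow_left₀ (by linarith) hy1 k
  calc ((k.factorial:ℝ) * Real.exp ((1/2 - β) * y)) / (|γ|^(k+1) * y^k)
      ≤ ((k.factorial:ℝ) * (Real.exp (ε/2) * Real.exp ((1/2 - β)*ω))) / (|γ|^(k+1) * (ω-ε)^k) :=
        div_le_div₀ (by positivity) hnum (mul_pos (pow_pos hγ0 _) (pow_pos (by linarith) _)) hden
    _ = (k.factorial:ℝ) * Real.exp (ε/2) * Real.exp ((1/2 - β)*ω) / ((ω-ε)^k * |γ|^(k+1)) := by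
        ring

set_option maxHeartbeats 1000000 in
theorem Phi_asymptotic_expansion
    (ε ω a : ℝ) (K : ℝ → ℝ) (ρ : ℂ) (k : ℕ)
    (hε : 0 < ε) (hεω : ε < ω)
    (hK : MeasureTheory.IntegrableOn K (Set.Icc (-ε) ε))
    (hK1 : (∫ y in Set.Icc (-ε) ε, |K y|) = 1)
    (ha : a ∈ Set.Icc (0 : ℝ) 1)
    (hβ : ρ.re ∈ Set.Icc (0 : ℝ) 1) (hγ : ρ.im ≠ 0)
    (hk : 1 ≤ k) :
    ‖(∫ y in (ω - ε)..(ω + ε),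
          ((K (y - ω) * y * Real.exp ((1/2 - a) * y) : ℝ) : ℂ) *
            Eit (((a : ℂ) - ρ) * y))
        - ∑ j ∈ Finset.Icc 1 k,
            (((j - 1).factorial : ℂ) *
              ((-1 : ℂ) ^ j * ∫ y in (ω - ε)..(ω + ε),
                (y : ℂ) ^ ((1 : ℤ) - (j : ℤ)) * ((K (y - ω) : ℝ) : ℂ) *
                  Complex.exp ((1/2 - ρ) * y))
              / (ρ - (a : ℂ)) ^ j)‖
      ≤ (k.factorial : ℝ) * Real.exp (ε / 2) * Real.exp ((1/2 - ρ.re) * ω)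
          / ((ω - ε) ^ k * |ρ.im| ^ (k + 1)) := by
  obtain ⟨hβ0, hβ1⟩ := hβ
  have hab : ω - ε ≤ ω + ε := by linarith
  have hωε : 0 < ω - ε := by linarith
  set B0 : ℝ := (k.factorial : ℝ) * Real.exp (ε / 2) * Real.exp ((1/2 - ρ.re) * ω)
      / ((ω - ε) ^ k * |ρ.im| ^ (k + 1)) with hB0_def
  set c : ℂ := (a:ℂ) - ρ with hc_def
  have hcim0 : c.im ≠ 0 := by
    rw [hc_def]; simp only [Complex.sub_im, Complex.ofReal_im, zero_sub]
    exact neg_ne_zero.2 hγ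
  set s : Set ℝ := Set.Ioc (ω - ε) (ω + ε) with hs_def
  have hs : MeasurableSet s := measurableSet_Ioc
  have hy_pos : ∀ y ∈ s, 0 < y := fun y hy => hωε.trans hy.1
  have hzim : ∀ y : ℝ, (c * y).im = -ρ.im * y := by
    intro y
    rw [Complex.mul_im, hc_def]
    simp
  set CK : ℝ → ℂ := fun y => ((K (y - ω) * y * Real.exp ((1/2 - a) * y) : ℝ) : ℂ) with hCK_def
  set Sm : ℝ → ℂ := fun y =>
    ∑ j ∈ Finset.Icc 1 k, ((j-1).factorial : ℂ) * (c * y) ^ (-(j:ℤ)) with hSm_def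
  set E : ℝ → ℂ := fun y => Eit (c * y) - Complex.exp (c * y) * Sm y with hE_def
  -- integrability of shifted K
  have hKi : IntervalIntegrable K MeasureTheory.volume (-ε) ε :=
    (intervalIntegrable_iff_integrableOn_Ioc_of_le (by linarith)).2
      (hK.mono_set Set.Ioc_subset_Icc_self)
  have hKs : IntegrableOn (fun y => K (y - ω)) s := by
    have h1 := hKi.comp_sub_right ω
    rw [show -ε + ω = ω - ε by ring, show ε + ω = ω + ε by ring] at h1
    exact (intervalIntegrable_iff_integrableOn_Ioc_of_le hab).1 h1
  have hK1' : (∫ y in s, |K (y - ω)|) = 1 := by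
    rw [hs_def, ← intervalIntegral.integral_of_le hab,
      intervalIntegral.integral_comp_sub_right (fun x => |K x|) ω,
      show ω - ε - ω = -ε by ring, show ω + ε - ω = ε by ring,
      intervalIntegral.integral_of_le (by linarith : -ε ≤ ε),
      ← integral_Icc_eq_integral_Ioc]
    exact hK1
  -- bound for E
  have hEb : ∀ y ∈ s, ‖E y‖ ≤ (k.factorial : ℝ) *
      (Real.exp ((a - ρ.re) * y) * ((|ρ.im| * y) ^ (k+1))⁻¹) := by
    intro y hy
    have hy0 := hy_pos y hy
    have hz : (c * y).im ≠ 0 := by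
      rw [hzim]; exact mul_ne_zero (neg_ne_zero.2 hγ) hy0.ne'
    have h := Eit_sub_expand (c * y) hz k
    have hre : (c * y).re = (a - ρ.re) * y := by
      rw [Complex.mul_re, hc_def]; simp
    have him : |(c * y).im| = |ρ.im| * y := by
      rw [hzim, neg_mul, abs_neg, abs_mul, abs_of_pos hy0]
    rw [hre, him] at h
    exact h
  -- continuity of E on s
  have hEc : ContinuousOn E s := by
    intro y hy
    have hy0 := hy_pos y hy
    have hcy : c * (y:ℂ) ≠ 0 := by
      intro h0
      have := congrArg Complex.im h0
      rw [hzim] at this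
      exact (mul_ne_zero (neg_ne_zero.2 hγ) hy0.ne') (by simpa using this)
    apply ContinuousAt.continuousWithinAt
    apply ContinuousAt.sub
    · exact continuousAt_Eit_mul c hcim0 hy0
    · apply ContinuousAt.mul
      · exact (Complex.continuous_exp.comp
          (continuous_const.mul Complex.continuous_ofReal)).continuousAt
      · apply tendsto_finset_sum
        intro j _
        exact continuousAt_const.mul
          (((continuous_const.mul Complex.continuous_ofReal).continuousAt).zpow₀ _ (Or.inl hcy))
  -- pointwise bound for the error integrand
  have hptb : ∀ y ∈ s, ‖CK y * E y‖ ≤ B0 * |K (y - ω)| := by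
    intro y hy
    have hy0 := hy_pos y hy
    have h1 : ‖CK y‖ = |K (y - ω)| * (y * Real.exp ((1/2 - a) * y)) := by
      rw [hCK_def]
      simp only [Complex.norm_real, Real.norm_eq_abs]
      rw [abs_mul, abs_mul, abs_of_pos hy0, abs_of_pos (Real.exp_pos _)]
      ring
    rw [norm_mul, h1]
    calc |K (y - ω)| * (y * Real.exp ((1/2 - a) * y)) * ‖E y‖
        ≤ |K (y - ω)| * (y * Real.exp ((1/2 - a) * y)) *
            ((k.factorial : ℝ) * (Real.exp ((a - ρ.re) * y) * ((|ρ.im| * y) ^ (k+1))⁻¹)) := by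
          apply mul_le_mul_of_nonneg_left (hEb y hy) (by positivity)
      _ = |K (y - ω)| * (y * Real.exp ((1/2 - a) * y) *
            ((k.factorial : ℝ) * (Real.exp ((a - ρ.re) * y) * ((|ρ.im| * y) ^ (k+1))⁻¹))) := by
          ring
      _ ≤ |K (y - ω)| * B0 := by
          apply mul_le_mul_of_nonneg_left _ (abs_nonneg _)
          exact scalar_bound ε ω ρ.re ρ.im y a k hε hεω hβ0 hβ1 hγ hy.1.le hy.2
      _ = B0 * |K (y - ω)| := mul_comm _ _
  -- integrability of the error integrand
  have hKsC : Integrable (fun y => ((K (y - ω) : ℝ) : ℂ)) (volume.restrict s) := hKs.ofReal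
  have hCKmeas : AEStronglyMeasurable CK (volume.restrict s) := by
    rw [hCK_def]
    apply Complex.continuous_ofReal.comp_aestronglyMeasurable
    exact (hKs.aestronglyMeasurable.mul
        (continuous_id.aestronglyMeasurable.restrict)).mul
      ((Real.continuous_exp.comp
        (continuous_const.mul continuous_id)).aestronglyMeasurable.restrict)
  have hErri : IntegrableOn (fun y => CK y * E y) s := by
    apply Integrable.mono' (hKs.abs.const_mul B0)
    · exact hCKmeas.mul (hEc.aestronglyMeasurable hs)
    · rw [MeasureTheory.ae_restrict_iff' hs]
      exact Filter.Eventually.of_forall (fun y hy => hptb y hy)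
  -- per-term integrability
  have htermi : ∀ j ∈ Finset.Icc 1 k, IntegrableOn
      (fun y => CK y * (Complex.exp (c * y) *
        (((j-1).factorial : ℂ) * (c * y) ^ (-(j:ℤ))))) s := by
    intro j _
    have hcont : ContinuousOn (fun y : ℝ => ((y * Real.exp ((1/2 - a) * y) : ℝ) : ℂ) *
        (Complex.exp (c * y) * (((j-1).factorial : ℂ) * (c * y) ^ (-(j:ℤ)))))
        (Set.Icc (ω - ε) (ω + ε)) := by
      intro y hy
      have hy0 : 0 < y := hωε.trans_le hy.1
      have hcy : c * (y:ℂ) ≠ 0 := by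
        intro h0
        have := congrArg Complex.im h0
        rw [hzim] at this
        exact (mul_ne_zero (neg_ne_zero.2 hγ) hy0.ne') (by simpa using this)
      apply ContinuousAt.continuousWithinAt
      apply ContinuousAt.mul
      · exact (Complex.continuous_ofReal.comp
          (continuous_id.mul (Real.continuous_exp.comp (continuous_const.mul continuous_id)))).continuousAt
      · apply ContinuousAt.mul
        · exact (Complex.continuous_exp.comp
            (continuous_const.mul Complex.continuous_ofReal)).continuousAt
        · exact continuousAt_const.mul
            (((continuous_const.mul Complex.continuous_ofReal).continuousAt).zpow₀ _ (Or.inl hcy))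
    obtain ⟨C, hC⟩ := (isCompact_Icc).exists_bound_of_continuousOn hcont
    have hbdd : IntegrableOn (fun y => ((y * Real.exp ((1/2 - a) * y) : ℝ) : ℂ) *
        (Complex.exp (c * y) * (((j-1).factorial : ℂ) * (c * y) ^ (-(j:ℤ)))) *
          ((K (y - ω) : ℝ) : ℂ)) s := by
      apply Integrable.bdd_mul hKsC
        ((hcont.mono (Set.Ioc_subset_Icc_self)).aestronglyMeasurable hs)
      rw [MeasureTheory.ae_restrict_iff' hs]
      exact Filter.Eventually.of_forall (fun y hy => hC y (Set.Ioc_subset_Icc_self hy))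
    apply hbdd.congr
    filter_upwards with y
    rw [hCK_def]
    push_cast
    ring
  -- split the integral
  have hptws : ∀ y : ℝ, CK y * Eit (c * y)
      = (∑ j ∈ Finset.Icc 1 k, CK y * (Complex.exp (c * y) *
          (((j-1).factorial : ℂ) * (c * y) ^ (-(j:ℤ))))) + CK y * E y := by
    intro y
    rw [hE_def, hSm_def]
    simp only [Finset.mul_sum, ← Finset.mul_sum]
    ring
  have hsplit : (∫ y in s, CK y * Eit (c * y))
      = (∑ j ∈ Finset.Icc 1 k, ∫ y in s, CK y * (Complex.exp (c * y) *
          (((j-1).factorial : ℂ) * (c * y) ^ (-(j:ℤ))))) + ∫ y in s, CK y * E y := by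
    rw [← integral_finset_sum _ htermi,
      ← integral_add (integrable_finset_sum _ htermi) hErri]
    exact integral_congr_ae (Filter.Eventually.of_forall hptws)
  -- identify the terms
  have hterm_eq : ∀ j ∈ Finset.Icc 1 k,
      (∫ y in s, CK y * (Complex.exp (c * y) * (((j-1).factorial : ℂ) * (c * y) ^ (-(j:ℤ)))))
      = (((j - 1).factorial : ℂ) *
          ((-1 : ℂ) ^ j * ∫ y in (ω - ε)..(ω + ε),
            (y : ℂ) ^ ((1 : ℤ) - (j : ℤ)) * ((K (y - ω) : ℝ) : ℂ) *
              Complex.exp ((1/2 - ρ) * y))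
          / (ρ - (a : ℂ)) ^ j) := by
    intro j _
    rw [intervalIntegral.integral_of_le hab, ← hs_def]
    rw [setIntegral_congr_fun hs (fun y hy =>
      pointwise_term a ρ j (K (y - ω)) y (hy_pos y hy)), integral_const_mul]
    ring
  -- final computation
  rw [intervalIntegral.integral_of_le hab, ← hs_def, hsplit,
    Finset.sum_congr rfl hterm_eq, add_sub_cancel_left]
  calc ‖∫ y in s, CK y * E y‖
      ≤ ∫ y in s, B0 * |K (y - ω)| := by
        apply norm_integral_le_of_norm_le (hKs.abs.const_mul B0)
        rw [MeasureTheory.ae_restrict_iff' hs]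
        exact Filter.Eventually.of_forall (fun y hy => hptb y hy)
    _ = B0 := by rw [integral_const_mul, hK1', mul_one]
end

section
/- Let 0 < ε < ω with eε < ω, let K ∈ L¹([−ε,ε]) with ‖K‖_{L¹} = 1, let ρ = β + iγ with 0 ≤ β ≤ 1 and γ ∈ ℝ \ {0}, let j ≥ 2 and m ≥ 0 be integers, and set F_{ω,ρ}^{(−j)}(0) = (−1)^j ∫_{ω−ε}^{ω+ε} y^{1−j} K(y−ω) e^{(1/2−ρ)y} dy. Then | F_{ω,ρ}^{(−j)}(0) − (−1)^j e^{(1/2−ρ)ω} ∑_{n=0}^m C(n+j−2, n)·(−i)^n·K̂^{(n)}(ρ/i − 1/(2i)) / ω^{n+j−1} | ≤ ( e^{j−2+ε/2}·e^{(1/2−β)ω} / ω^{j−1} ) · (eε/ω)^{m+1} / (1 − eε/ω), where C(·,·) denotes the binomial coefficient and K̂^{(n)} is the n-th derivative of the entire function K̂(z) = ∫_{−ε}^{ε} K(y) e^{−izy} dy. -/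
open scoped BigOperators

open MeasureTheory Complex intervalIntegral Metric

private lemma Kmul_ii {ε : ℝ} {K : ℝ → ℝ} (hε : 0 < ε)
    (hK : IntegrableOn K (Set.Icc (-ε) ε)) {g : ℝ → ℂ}
    (hg : ContinuousOn g (Set.Icc (-ε) ε)) :
    IntervalIntegrable (fun t => (K t : ℂ) * g t) volume (-ε) ε := by
  rw [intervalIntegrable_iff]
  have hsub : Set.uIoc (-ε) ε ⊆ Set.Icc (-ε) ε := by
    rw [Set.uIoc_of_le (by linarith)]
    exact Set.Ioc_subset_Icc_self
  refine IntegrableOn.mono_set ?_ hsub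
  have hKc : IntegrableOn (fun t => (K t : ℂ)) (Set.Icc (-ε) ε) := hK.ofReal
  obtain ⟨C, hC⟩ := (isCompact_Icc (a := -ε) (b := ε)).exists_bound_of_continuousOn hg
  have hb : ∀ᵐ t ∂(volume.restrict (Set.Icc (-ε) ε)), ‖g t‖ ≤ C := by
    filter_upwards [ae_restrict_mem measurableSet_Icc] with t ht using hC t ht
  have := hKc.bdd_mul (hg.aestronglyMeasurable measurableSet_Icc) hb
  simpa [IntegrableOn, mul_comm] using this

private lemma iter_deriv_formula {ε : ℝ} {K : ℝ → ℝ} (hε : 0 < ε)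
    (hK : IntegrableOn K (Set.Icc (-ε) ε)) (n : ℕ) (z : ℂ) :
    iteratedDeriv n (fun z : ℂ => ∫ y in (-ε)..ε, ((K y : ℝ) : ℂ) *
        Complex.exp (-Complex.I * z * y)) z
    = ∫ y in (-ε)..ε, ((K y : ℝ) : ℂ) *
        ((-Complex.I * y) ^ n * Complex.exp (-Complex.I * z * y)) := by
  induction n generalizing z with
  | zero => simp
  | succ n ih =>
    rw [iteratedDeriv_succ]
    have hfun : iteratedDeriv n (fun z : ℂ => ∫ y in (-ε)..ε, ((K y : ℝ) : ℂ) *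
        Complex.exp (-Complex.I * z * y))
        = fun z => ∫ y in (-ε)..ε, ((K y : ℝ) : ℂ) *
          ((-Complex.I * y) ^ n * Complex.exp (-Complex.I * z * y)) := funext ih
    rw [hfun]
    -- now show deriv of this is the target
    have hcont : ∀ (q : ℕ) (w : ℂ), ContinuousOn
        (fun t : ℝ => (-Complex.I * t) ^ q * Complex.exp (-Complex.I * w * t))
        (Set.Icc (-ε) ε) := by
      intro q w
      apply Continuous.continuousOn
      fun_prop
    have key : HasDerivAt
        (fun w : ℂ => ∫ y in (-ε)..ε, ((K y : ℝ) : ℂ) *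
          ((-Complex.I * y) ^ n * Complex.exp (-Complex.I * w * y)))
        (∫ y in (-ε)..ε, ((K y : ℝ) : ℂ) *
          ((-Complex.I * y) ^ (n+1) * Complex.exp (-Complex.I * z * y))) z := by
      set bound : ℝ → ℝ := fun t => |K t| * (ε ^ (n+1) * Real.exp ((‖z‖+1)*ε)) with hbound
      have hbi : IntervalIntegrable bound volume (-ε) ε := by
        rw [intervalIntegrable_iff]
        have hsub : Set.uIoc (-ε) ε ⊆ Set.Icc (-ε) ε := by
          rw [Set.uIoc_of_le (by linarith)]; exact Set.Ioc_subset_Icc_self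
        have : IntegrableOn (fun t => |K t| * (ε ^ (n+1) * Real.exp ((‖z‖+1)*ε)))
            (Set.Icc (-ε) ε) volume := (hK.abs).mul_const _
        exact this.mono_set hsub
      refine (hasDerivAt_integral_of_dominated_loc_of_deriv_le (F := fun w t =>
          ((K t : ℝ) : ℂ) * ((-Complex.I * t) ^ n * Complex.exp (-Complex.I * w * t)))
          (F' := fun w t => ((K t : ℝ) : ℂ) *
            ((-Complex.I * t) ^ (n+1) * Complex.exp (-Complex.I * w * t)))
          (bound := bound) (Metric.ball_mem_nhds z one_pos) ?_ ?_ ?_ ?_ hbi ?_).2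
      · filter_upwards with w
        exact ((Kmul_ii hε hK (hcont n w)).def').aestronglyMeasurable
      · exact Kmul_ii hε hK (hcont n z)
      · exact ((Kmul_ii hε hK (hcont (n+1) z)).def').aestronglyMeasurable
      · filter_upwards with t ht w hw
        have ht' : |t| ≤ ε := by
          rw [Set.uIoc_of_le (by linarith)] at ht
          exact abs_le.2 ⟨le_of_lt ht.1, ht.2⟩
        have hre : (-Complex.I * w * t).re ≤ (‖z‖+1)*ε := by
          have : (-Complex.I * w * t).re = w.im * t := by simp
          rw [this]
          calc w.im * t ≤ |w.im * t| := le_abs_self _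
            _ = |w.im| * |t| := abs_mul _ _
            _ ≤ ‖w‖ * ε := by
                apply mul_le_mul (Complex.abs_im_le_norm w) ht' (abs_nonneg t)
                exact norm_nonneg w
            _ ≤ (‖z‖+1) * ε := by
                have : ‖w‖ ≤ ‖z‖ + 1 := by
                  have h1 := mem_ball_iff_norm.mp hw
                  have h2 : ‖w‖ - ‖z‖ ≤ ‖w - z‖ := norm_sub_norm_le w z
                  linarith
                exact mul_le_mul_of_nonneg_right this hε.le
        rw [hbound]
        have enorm : ‖((K t:ℝ):ℂ) * ((-Complex.I*(t:ℂ))^(n+1) *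
            Complex.exp (-Complex.I*w*(t:ℂ)))‖ = |K t| * (‖-Complex.I*(t:ℂ)‖^(n+1) *
            ‖Complex.exp (-Complex.I*w*(t:ℂ))‖) := by
          rw [norm_mul, norm_mul, norm_pow, Complex.norm_real, Real.norm_eq_abs]
        rw [enorm]
        have e1 : ‖-Complex.I*(t:ℂ)‖ ≤ ε := by simpa using ht'
        have e2 : ‖Complex.exp (-Complex.I*w*(t:ℂ))‖ ≤ Real.exp ((‖z‖+1)*ε) := by
          rw [Complex.norm_exp]
          exact Real.exp_le_exp.2 hre
        apply mul_le_mul_of_nonneg_left _ (abs_nonneg _)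
        exact mul_le_mul (pow_le_pow_left₀ (norm_nonneg _) e1 _) e2 (norm_nonneg _) (by positivity)
      · filter_upwards with t ht w hw
        have h0 : HasDerivAt (fun w : ℂ => -Complex.I * w * (t:ℂ)) (-Complex.I * t) w := by
          simpa using ((hasDerivAt_id w).const_mul (-Complex.I)).mul_const (t:ℂ)
        have h2 := (h0.cexp).const_mul (((K t : ℝ) : ℂ) * (-Complex.I * t) ^ n)
        exact (h2.congr_deriv (by ring)).congr_of_eventuallyEq
          (Filter.Eventually.of_forall fun x => by dsimp only; ring)
    rw [key.deriv]

private lemma nchoose_le (n k : ℕ) : n.choose k ≤ 2 ^ n := by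
  rcases le_or_gt k n with h | h
  · calc n.choose k ≤ ∑ m ∈ Finset.range (n+1), n.choose m :=
        Finset.single_le_sum (fun i _ => Nat.zero_le _) (Finset.mem_range.2 (by omega))
    _ = 2 ^ n := Nat.sum_range_choose n
  · simp [Nat.choose_eq_zero_of_lt h]

private lemma remainder_bound {ε ω : ℝ} (hε : 0 < ε) (hεω : ε < ω)
    (heεω : Real.exp 1 * ε < ω) (k m : ℕ) {t : ℝ} (ht : |t| ≤ ε) :
    |(t + ω) ^ (-(k+1 : ℕ) : ℤ) - ∑ n ∈ Finset.range (m+1),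
        ((n + k).choose n : ℝ) * (-1)^n * t^n / ω^(n+k+1)|
      ≤ Real.exp k / ω^(k+1) * ((Real.exp 1 * ε / ω)^(m+1) / (1 - Real.exp 1 * ε / ω)) := by
  have hω : 0 < ω := lt_trans hε hεω
  have htω : 0 < t + ω := by have := abs_le.1 ht; linarith
  have h2e : (2:ℝ) ≤ Real.exp 1 := by
    have := Real.add_one_le_exp (1:ℝ); linarith
  set b : ℝ := Real.exp 1 * ε / ω with hbdef
  have hb0 : 0 < b := by positivity
  have hb1 : b < 1 := (div_lt_one hω).2 heεω
  set x : ℝ := -t / ω with hx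
  have hxabs : |x| ≤ ε / ω := by
    rw [hx, abs_div, abs_neg, abs_of_pos hω]
    exact div_le_div_of_nonneg_right ht hω.le
  have hεω' : ε / ω < 1 := (div_lt_one hω).2 hεω
  have hx1 : ‖x‖ < 1 := lt_of_le_of_lt (by rwa [Real.norm_eq_abs]) hεω'
  have hS : HasSum (fun n : ℕ => ((n + k).choose k : ℝ) * x ^ n) (1 / (1 - x)^(k+1)) :=
    hasSum_choose_mul_geometric_of_norm_lt_one k hx1
  -- identify the zpow
  have h1x : 1 - x = (t + ω) / ω := by rw [hx]; field_simp; ring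
  have hzpow : (t + ω) ^ (-(k+1 : ℕ) : ℤ) = (1 / (1 - x)^(k+1)) / ω^(k+1) := by
    rw [h1x, zpow_neg, zpow_natCast, div_pow]
    rw [eq_div_iff (show (ω:ℝ)^(k+1) ≠ 0 by positivity)]
    rw [inv_eq_one_div, div_mul_eq_mul_div, one_mul, div_eq_div_iff (by positivity) (by positivity)]
    field_simp
  -- identify partial sum terms
  have hterm : ∀ n : ℕ, ((n + k).choose n : ℝ) * (-1)^n * t^n / ω^(n+k+1)
      = (((n + k).choose k : ℝ) * x ^ n) / ω^(k+1) := by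
    intro n
    rw [Nat.choose_symm_add, hx, div_pow, neg_pow]
    rw [pow_add, pow_add]
    field_simp
    ring
  rw [hzpow, Finset.sum_congr rfl (fun n _ => hterm n), ← Finset.sum_div, ← sub_div,
    abs_div, abs_of_pos (show (0:ℝ) < ω^(k+1) by positivity)]
  rw [div_le_iff₀ (show (0:ℝ) < ω^(k+1) by positivity)]
  -- tail estimate
  have htail : 1 / (1 - x)^(k+1) - ∑ n ∈ Finset.range (m+1), ((n + k).choose k : ℝ) * x ^ n
      = ∑' n : ℕ, ((n + (m+1) + k).choose k : ℝ) * x ^ (n + (m+1)) := by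
    have := (Summable.sum_add_tsum_nat_add (f := fun n : ℕ => ((n + k).choose k : ℝ) * x ^ n)
      (m+1) hS.summable)
    rw [hS.tsum_eq] at this
    linarith [this]
  rw [htail]
  have hgeom : HasSum (fun n : ℕ => (Real.exp k * b^(m+1)) * b ^ n)
      ((Real.exp k * b^(m+1)) * (1 - b)⁻¹) :=
    (hasSum_geometric_of_lt_one hb0.le hb1).mul_left _
  have hbound : ∀ n : ℕ, ‖((n + (m+1) + k).choose k : ℝ) * x ^ (n + (m+1))‖
      ≤ (Real.exp k * b^(m+1)) * b ^ n := by
    intro n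
    rw [Real.norm_eq_abs, abs_mul, _root_.abs_pow, Nat.abs_cast]
    have hc : ((n + (m+1) + k).choose k : ℝ) ≤ (Real.exp 1) ^ (n + (m+1) + k) := by
      calc ((n + (m+1) + k).choose k : ℝ) ≤ ((2:ℝ) ^ (n + (m+1) + k)) := by
            exact_mod_cast nchoose_le (n + (m+1) + k) k
        _ ≤ (Real.exp 1) ^ (n + (m+1) + k) :=
            pow_le_pow_left₀ (by norm_num) h2e _
    have hxp : |x| ^ (n + (m+1)) ≤ (ε/ω) ^ (n + (m+1)) :=
      pow_le_pow_left₀ (abs_nonneg x) hxabs _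
    calc ((n + (m+1) + k).choose k : ℝ) * |x| ^ (n + (m+1))
        ≤ (Real.exp 1) ^ (n + (m+1) + k) * (ε/ω) ^ (n + (m+1)) := by
          apply mul_le_mul hc hxp (by positivity) (by positivity)
      _ = (Real.exp k * b^(m+1)) * b ^ n := by
          rw [hbdef, ← Real.exp_one_pow,
            show Real.exp 1 * ε / ω = Real.exp 1 * (ε/ω) from by ring,
            mul_pow, mul_pow, pow_add, pow_add]
          ring
  have hnorm := tsum_of_norm_bounded hgeom hbound
  rw [Real.norm_eq_abs] at hnorm
  have h1b : (1:ℝ) - b ≠ 0 := by linarith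
  calc |∑' n : ℕ, ((n + (m+1) + k).choose k : ℝ) * x ^ (n + (m+1))|
      ≤ (Real.exp k * b^(m+1)) * (1 - b)⁻¹ := hnorm
    _ = Real.exp k / ω ^ (k + 1) * (b ^ (m + 1) / (1 - b)) * ω ^ (k + 1) := by
        field_simp
theorem F_expansion
    (ε ω : ℝ) (K : ℝ → ℝ) (ρ : ℂ) (j m : ℕ)
    (hε : 0 < ε) (hεω : ε < ω) (heεω : Real.exp 1 * ε < ω)
    (hK : MeasureTheory.IntegrableOn K (Set.Icc (-ε) ε))
    (hK1 : (∫ y in Set.Icc (-ε) ε, |K y|) = 1)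
    (hβ : ρ.re ∈ Set.Icc (0 : ℝ) 1) (hγ : ρ.im ≠ 0)
    (hj : 2 ≤ j) :
    Norm.norm
      (((-1 : ℂ) ^ j * ∫ y in (ω - ε)..(ω + ε),
          (y : ℂ) ^ ((1 : ℤ) - (j : ℤ)) * ((K (y - ω) : ℝ) : ℂ) *
            Complex.exp ((1/2 - ρ) * y))
        - (-1 : ℂ) ^ j * Complex.exp ((1/2 - ρ) * ω) *
            ∑ n ∈ Finset.range (m + 1),
              ((n + j - 2).choose n : ℂ) * (-Complex.I) ^ n *
                iteratedDeriv n
                  (fun z : ℂ => ∫ y in (-ε)..ε, ((K y : ℝ) : ℂ) *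
                    Complex.exp (-Complex.I * z * y))
                  (ρ / Complex.I - 1 / (2 * Complex.I))
                / (ω : ℂ) ^ (n + j - 1))
      ≤ Real.exp ((j : ℝ) - 2 + ε / 2) * Real.exp ((1/2 - ρ.re) * ω) / ω ^ (j - 1)
          * ((Real.exp 1 * ε / ω) ^ (m + 1) / (1 - Real.exp 1 * ε / ω)) := by
  obtain ⟨k, rfl⟩ : ∃ k, j = k + 2 := ⟨j - 2, by omega⟩
  have hω : 0 < ω := lt_trans (by positivity) heεω
  set c : ℂ := 1/2 - ρ with hc
  set z0 : ℂ := ρ / Complex.I - 1 / (2 * Complex.I) with hz0def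
  have hz0 : -Complex.I * z0 = c := by
    rw [hz0def, hc]
    field_simp
    ring_nf
  have e2 : ∀ n : ℕ, n + (k+2) - 2 = n + k := fun n => by omega
  have e1 : ∀ n : ℕ, n + (k+2) - 1 = n + k + 1 := fun n => by omega
  have e3 : (1 : ℤ) - ((k+2 : ℕ) : ℤ) = -((k+1 : ℕ) : ℤ) := by push_cast; ring
  simp only [e1, e2, e3, show k + 2 - 1 = k + 1 from rfl]
  set b : ℝ := Real.exp 1 * ε / ω with hb
  have hb1 : b < 1 := (div_lt_one hω).2 heεω
  have hb0 : 0 < b := by rw [hb]; positivity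
  set M : ℝ := Real.exp k / ω^(k+1) * (b^(m+1) / (1-b)) with hM
  have hM0 : 0 ≤ M := by
    rw [hM]
    apply mul_nonneg (by positivity)
    apply div_nonneg (by positivity)
    linarith
  set P : ℝ → ℝ := fun t => (t + ω) ^ (-(k+1 : ℕ) : ℤ) with hP
  set Q : ℝ → ℝ := fun t => ∑ n ∈ Finset.range (m+1),
      ((n + k).choose n : ℝ) * (-1)^n * t^n / ω^(n+k+1) with hQ
  -- continuity and integrability
  have hPc : ContinuousOn (fun t : ℝ => Complex.exp (c*t) * ((P t : ℝ) : ℂ))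
      (Set.Icc (-ε) ε) := by
    apply ContinuousOn.mul
    · exact (Complex.continuous_exp.comp
        (continuous_const.mul Complex.continuous_ofReal)).continuousOn
    · apply Complex.continuous_ofReal.comp_continuousOn
      rw [hP]
      apply ContinuousOn.zpow₀ ((continuous_id.add continuous_const).continuousOn)
      intro t ht
      left
      have h1 : -ε ≤ t := ht.1
      simp only [Pi.add_apply, id_eq]
      intro h
      rw [add_eq_zero_iff_eq_neg] at h
      linarith [h ▸ h1]
  have hQc : Continuous Q := by
    rw [hQ]
    apply continuous_finset_sum
    intro n _
    fun_prop
  have iiP : IntervalIntegrable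
      (fun t => ((K t : ℝ) : ℂ) * (Complex.exp (c*t) * ((P t : ℝ):ℂ))) volume (-ε) ε :=
    Kmul_ii hε hK hPc
  have iiQ : IntervalIntegrable
      (fun t => ((K t : ℝ) : ℂ) * (Complex.exp (c*t) * ((Q t : ℝ):ℂ))) volume (-ε) ε := by
    apply Kmul_ii hε hK
    apply Continuous.continuousOn
    fun_prop
  -- identify the iterated derivatives
  have hiter : ∀ n : ℕ, iteratedDeriv n (fun z : ℂ => ∫ y in (-ε)..ε, ((K y:ℝ):ℂ) *
        Complex.exp (-Complex.I * z * y)) z0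
      = ∫ t in (-ε)..ε, ((K t:ℝ):ℂ) * ((-Complex.I * t)^n * Complex.exp (c * t)) := by
    intro n
    rw [iter_deriv_formula hε hK n z0]
    apply intervalIntegral.integral_congr
    intro t _
    rw [hz0]
  have hminus : ∀ (n:ℕ) (t:ℝ),
      (-Complex.I)^n * (-Complex.I*(t:ℂ))^n = (-1:ℂ)^n * (t:ℂ)^n := by
    intro n t
    rw [← mul_pow, ← mul_pow]
    congr 1
    calc -Complex.I * (-Complex.I * (t:ℂ)) = (Complex.I*Complex.I) * t := by ring
      _ = -1 * t := by rw [Complex.I_mul_I]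
  -- the sum as an integral
  have hB : (∑ n ∈ Finset.range (m+1), ((n+k).choose n : ℂ) * (-Complex.I)^n *
        iteratedDeriv n (fun z : ℂ => ∫ y in (-ε)..ε, ((K y:ℝ):ℂ) *
          Complex.exp (-Complex.I * z * y)) z0 / (ω:ℂ)^(n+k+1))
      = ∫ t in (-ε)..ε, ((K t:ℝ):ℂ) * (Complex.exp (c*t) * ((Q t : ℝ):ℂ)) := by
    have hterm : ∀ n ∈ Finset.range (m+1), ((n+k).choose n : ℂ) * (-Complex.I)^n *
        iteratedDeriv n (fun z : ℂ => ∫ y in (-ε)..ε, ((K y:ℝ):ℂ) *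
          Complex.exp (-Complex.I * z * y)) z0 / (ω:ℂ)^(n+k+1)
        = ∫ t in (-ε)..ε, ((K t:ℝ):ℂ) * (Complex.exp (c*t) *
            (((n+k).choose n : ℂ) * (-1:ℂ)^n * (t:ℂ)^n / (ω:ℂ)^(n+k+1))) := by
      intro n _
      rw [hiter n]
      rw [show ∀ X : ℂ, ((n+k).choose n : ℂ) * (-Complex.I)^n * X / (ω:ℂ)^(n+k+1)
          = (((n+k).choose n : ℂ) * (-Complex.I)^n / (ω:ℂ)^(n+k+1)) * X from fun X => by ring]
      rw [← intervalIntegral.integral_const_mul]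
      apply intervalIntegral.integral_congr
      intro t _
      dsimp only
      have hh : (((n+k).choose n : ℂ) * (-Complex.I)^n / (ω:ℂ)^(n+k+1)) *
          (((K t:ℝ):ℂ) * ((-Complex.I*(t:ℂ))^n * Complex.exp (c*t)))
          = (((n+k).choose n : ℂ) / (ω:ℂ)^(n+k+1)) *
            ((-Complex.I)^n * (-Complex.I*(t:ℂ))^n) *
            (((K t:ℝ):ℂ) * Complex.exp (c*t)) := by ring
      rw [hh, hminus n t]
      ring
    rw [Finset.sum_congr rfl hterm, ← intervalIntegral.integral_finset_sum]
    · apply intervalIntegral.integral_congr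
      intro t _
      simp only [hQ]
      push_cast
      rw [Finset.mul_sum, Finset.mul_sum]
    · intro n _
      apply Kmul_ii hε hK
      apply Continuous.continuousOn
      fun_prop
  -- the first integral
  have hA : (∫ y in (ω-ε)..(ω+ε), (y:ℂ)^(-(k+1:ℕ):ℤ) * ((K (y-ω):ℝ):ℂ) *
        Complex.exp (c*y))
      = Complex.exp (c*ω) * ∫ t in (-ε)..ε, ((K t:ℝ):ℂ) *
          (Complex.exp (c*t) * ((P t : ℝ):ℂ)) := by
    rw [show ω - ε = -ε + ω by ring, show ω + ε = ε + ω by ring,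
      ← intervalIntegral.integral_comp_add_right (a := -ε) (b := ε)
        (f := fun y : ℝ => (y:ℂ)^(-(k+1:ℕ):ℤ) * ((K (y-ω):ℝ):ℂ) * Complex.exp (c*y)) ω]
    rw [← intervalIntegral.integral_const_mul]
    apply intervalIntegral.integral_congr
    intro t _
    simp only [hP, add_sub_cancel_right]
    rw [show (((t+ω : ℝ)):ℂ) = (t:ℂ) + (ω:ℂ) from by push_cast; ring]
    rw [mul_add, Complex.exp_add]
    push_cast
    ring
  -- combine
  have hsplit : (fun t : ℝ => ((K t:ℝ):ℂ) * (Complex.exp (c*t) * (((P t - Q t : ℝ)):ℂ)))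
      = fun t => ((K t:ℝ):ℂ) * (Complex.exp (c*t) * ((P t:ℝ):ℂ)) -
          ((K t:ℝ):ℂ) * (Complex.exp (c*t) * ((Q t:ℝ):ℂ)) := by
    funext t; push_cast; ring
  have hD : (((-1 : ℂ) ^ (k+2) * ∫ y in (ω - ε)..(ω + ε),
          (y : ℂ) ^ (-((k+1:ℕ)) : ℤ) * ((K (y - ω) : ℝ) : ℂ) * Complex.exp (c * y))
        - (-1 : ℂ) ^ (k+2) * Complex.exp (c * ω) *
            ∑ n ∈ Finset.range (m + 1),
              ((n + k).choose n : ℂ) * (-Complex.I) ^ n *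
                iteratedDeriv n
                  (fun z : ℂ => ∫ y in (-ε)..ε, ((K y : ℝ) : ℂ) *
                    Complex.exp (-Complex.I * z * y)) z0
                / (ω : ℂ) ^ (n + k + 1))
      = (-1:ℂ)^(k+2) * Complex.exp (c*ω) *
        ∫ t in (-ε)..ε, ((K t:ℝ):ℂ) * (Complex.exp (c*t) * (((P t - Q t:ℝ)):ℂ)) := by
    rw [hA, hB, hsplit, intervalIntegral.integral_sub iiP iiQ]
    ring
  rw [hD, norm_mul, norm_mul]
  have h1 : ‖((-1:ℂ)^(k+2))‖ = 1 := by simp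
  have h2 : ‖(Complex.exp (c*ω))‖ = Real.exp ((1/2 - ρ.re)*ω) := by
    rw [Complex.norm_exp]
    congr 1
    rw [hc, show (1/2 : ℂ) = ((1/2 : ℝ) : ℂ) by norm_num]
    simp [Complex.mul_re]
  rw [h1, h2, one_mul]
  -- bound the integral
  have key : ‖(∫ t in (-ε)..ε, ((K t:ℝ):ℂ) *
        (Complex.exp (c*t) * (((P t - Q t:ℝ)):ℂ)))‖
      ≤ Real.exp (ε/2) * M := by
    have hgint : IntervalIntegrable (fun t => |K t| * (Real.exp (ε/2) * M))
        volume (-ε) ε := by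
      rw [intervalIntegrable_iff]
      have hsub : Set.uIoc (-ε) ε ⊆ Set.Icc (-ε) ε := by
        rw [Set.uIoc_of_le (by linarith)]; exact Set.Ioc_subset_Icc_self
      have : MeasureTheory.IntegrableOn (fun t => |K t| * (Real.exp (ε/2) * M))
          (Set.Icc (-ε) ε) volume := (hK.abs).mul_const _
      exact this.mono_set hsub
    refine le_trans (intervalIntegral.norm_integral_le_of_norm_le (by linarith) ?_ hgint) ?_
    · filter_upwards with t ht
      have htabs : |t| ≤ ε := abs_le.2 ⟨ht.1.le, ht.2⟩
      have hrem := remainder_bound hε hεω heεω k m htabs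
      have hrem' : |P t - Q t| ≤ M := by
        simp only [hP, hQ, hM, hb]
        exact hrem
      have hexp : ‖Complex.exp (c * t)‖ ≤ Real.exp (ε/2) := by
        rw [Complex.norm_exp]
        apply Real.exp_le_exp.2
        have hre : (c * (t:ℂ)).re = (1/2 - ρ.re) * t := by
          rw [hc, show (1/2 : ℂ) = ((1/2 : ℝ) : ℂ) by norm_num]
          simp [Complex.mul_re]
        rw [hre]
        have hb2 : |1/2 - ρ.re| ≤ 1/2 := abs_le.2 ⟨by linarith [hβ.2], by linarith [hβ.1]⟩
        calc (1/2 - ρ.re) * t ≤ |(1/2 - ρ.re) * t| := le_abs_self _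
          _ = |1/2 - ρ.re| * |t| := abs_mul _ _
          _ ≤ (1/2) * ε := mul_le_mul hb2 htabs (abs_nonneg t) (by norm_num)
          _ = ε/2 := by ring
      rw [norm_mul, norm_mul, Complex.norm_real, Complex.norm_real,
        Real.norm_eq_abs, Real.norm_eq_abs]
      apply mul_le_mul_of_nonneg_left _ (abs_nonneg _)
      exact mul_le_mul hexp hrem' (abs_nonneg _) (Real.exp_nonneg _)
    · rw [intervalIntegral.integral_mul_const,
        intervalIntegral.integral_of_le (by linarith : -ε ≤ ε),
        ← MeasureTheory.integral_Icc_eq_integral_Ioc, hK1, one_mul]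
  calc Real.exp ((1/2 - ρ.re)*ω) * ‖(∫ t in (-ε)..ε, ((K t:ℝ):ℂ) *
        (Complex.exp (c*t) * (((P t - Q t:ℝ)):ℂ)))‖
      ≤ Real.exp ((1/2 - ρ.re)*ω) * (Real.exp (ε/2) * M) :=
        mul_le_mul_of_nonneg_left key (Real.exp_nonneg _)
    _ = Real.exp ((((k+2:ℕ)):ℝ) - 2 + ε/2) * Real.exp ((1/2 - ρ.re)*ω) / ω^(k+1)
          * (b^(m+1) / (1-b)) := by
        rw [hM, show (((k+2:ℕ)):ℝ) - 2 + ε/2 = (k:ℝ) + ε/2 by push_cast; ring,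
          Real.exp_add]
        ring
end

section
/- Let 0 < ε ≤ δ < c/100, let n ≥ 0 be an integer, and let z ∈ ℂ satisfy |Re(z)| ≥ c/ε and |Im(z)| ≤ 1/2. Then |ℓ_{c,ε}^{(n)}(z)| ≤ n! · (c·e^{1.56√(δc)}/sinh c) · (2ε/δ)^n, where ℓ_{c,ε}^{(n)} denotes the n-th complex derivative of ℓ_{c,ε}. -/
open scoped BigOperators

/-- The entire function `w ↦ sin(√w)/√w = ∑ (-1)ⁿ wⁿ/(2n+1)!`. -/
noncomputable def sincSqrt (w : ℂ) : ℂ :=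
  ∑' n : ℕ, (-1) ^ n * w ^ n / ((2 * n + 1).factorial : ℂ)


lemma sinh_abs_le (y : ℝ) : |Real.sinh y| ≤ |y| * Real.exp |y| := by
  rw [Real.abs_sinh]
  set t := |y| with ht
  have ht0 : 0 ≤ t := abs_nonneg y
  have h1 : (1 : ℝ) - 2 * t ≤ Real.exp (-(2 * t)) := by
    linarith [Real.add_one_le_exp (-(2 * t))]
  have h2 : Real.exp (-(2 * t)) * Real.exp t = Real.exp (-t) := by
    rw [← Real.exp_add]; ring_nf
  have h3 : (1 - 2 * t) * Real.exp t ≤ Real.exp (-t) := by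
    calc (1 - 2 * t) * Real.exp t ≤ Real.exp (-(2 * t)) * Real.exp t :=
          mul_le_mul_of_nonneg_right h1 (Real.exp_nonneg t)
      _ = Real.exp (-t) := h2
  have h4 : Real.sinh t = (Real.exp t - Real.exp (-t)) / 2 := Real.sinh_eq t
  rw [h4]
  nlinarith [Real.exp_nonneg t]

lemma abs_sin_le_abs_mul (ζ : ℂ) :
    ‖Complex.sin ζ‖ ≤ ‖ζ‖ * Real.exp |ζ.im| := by
  set x := ζ.re with hx
  set y := ζ.im with hy
  have hζ : ζ = (x : ℂ) + (y : ℂ) * Complex.I := (Complex.re_add_im ζ).symm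
  have hs : Complex.sin ζ =
      ((Real.sin x * Real.cosh y : ℝ) : ℂ) + ((Real.cos x * Real.sinh y : ℝ) : ℂ) * Complex.I := by
    rw [hζ, Complex.sin_add, Complex.cos_mul_I, Complex.sin_mul_I]
    push_cast
    ring
  have habs : ‖Complex.sin ζ‖
      = Real.sqrt ((Real.sin x * Real.cosh y) ^ 2 + (Real.cos x * Real.sinh y) ^ 2) := by
    rw [hs, Complex.norm_def, Complex.normSq_add_mul_I]
  have habsζ : ‖ζ‖ = Real.sqrt (x ^ 2 + y ^ 2) := by
    rw [hζ, Complex.norm_def, Complex.normSq_add_mul_I]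
  rw [habs, habsζ]
  have key : (Real.sin x * Real.cosh y) ^ 2 + (Real.cos x * Real.sinh y) ^ 2
      ≤ (x ^ 2 + y ^ 2) * Real.exp |y| ^ 2 := by
    have h1 : Real.sin x ^ 2 + Real.cos x ^ 2 = 1 := Real.sin_sq_add_cos_sq x
    have h2 : Real.cosh y ^ 2 = Real.sinh y ^ 2 + 1 := Real.cosh_sq y
    have h3 : Real.sin x ^ 2 ≤ x ^ 2 := Real.sin_sq_le_sq
    have h4 : Real.sinh y ^ 2 ≤ y ^ 2 * Real.exp |y| ^ 2 := by
      have := sinh_abs_le y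
      nlinarith [abs_nonneg (Real.sinh y), abs_nonneg y, Real.exp_nonneg |y|, sq_abs (Real.sinh y), sq_abs y]
    have h5 : (1 : ℝ) ≤ Real.exp |y| ^ 2 := by
      nlinarith [Real.one_le_exp (abs_nonneg y)]
    nlinarith [sq_nonneg (Real.sin x), sq_nonneg (Real.cos x), sq_nonneg (Real.sinh y)]
  calc Real.sqrt ((Real.sin x * Real.cosh y) ^ 2 + (Real.cos x * Real.sinh y) ^ 2)
      ≤ Real.sqrt ((x ^ 2 + y ^ 2) * Real.exp |y| ^ 2) := Real.sqrt_le_sqrt key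
    _ = Real.sqrt (x ^ 2 + y ^ 2) * Real.exp |y| := by
        rw [Real.sqrt_mul (by positivity), Real.sqrt_sq (Real.exp_nonneg _)]

lemma sincSqrt_sq (ζ : ℂ) (hζ : ζ ≠ 0) : sincSqrt (ζ ^ 2) = Complex.sin ζ / ζ := by
  have h := (Complex.hasSum_sin ζ).div_const ζ
  have h2 : HasSum (fun n : ℕ => (-1) ^ n * (ζ ^ 2) ^ n / ((2 * n + 1).factorial : ℂ))
      (Complex.sin ζ / ζ) := by
    refine h.congr_fun fun n => ?_
    rw [← pow_mul]
    rw [mul_comm 2 n, pow_succ, mul_div_assoc, mul_div_assoc, mul_div_assoc]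
    congr 1
    rw [div_div, mul_div_mul_right _ _ hζ]
  exact h2.tsum_eq

lemma sincSqrt_zero : sincSqrt 0 = 1 := by
  rw [sincSqrt, tsum_eq_single 0]
  · norm_num
  · intro n hn
    simp [zero_pow hn]

lemma abs_sincSqrt_le (w ζ : ℂ) (hζ : ζ ^ 2 = w) :
    ‖sincSqrt w‖ ≤ Real.exp |ζ.im| := by
  rcases eq_or_ne ζ 0 with h0 | h0
  · subst h0
    simp only [← hζ]
    norm_num [sincSqrt_zero, Real.one_le_exp_iff]
  · rw [← hζ, sincSqrt_sq ζ h0, norm_div]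
    rw [div_le_iff₀ (by simpa using h0)]
    calc ‖Complex.sin ζ‖ ≤ ‖ζ‖ * Real.exp |ζ.im| := abs_sin_le_abs_mul ζ
      _ = Real.exp |ζ.im| * ‖ζ‖ := by ring

noncomputable def sincSeries : FormalMultilinearSeries ℂ ℂ ℂ :=
  FormalMultilinearSeries.ofScalars ℂ (fun n => (-1) ^ n / ((2 * n + 1).factorial : ℂ))

lemma sincSeries_radius : sincSeries.radius = ⊤ := by
  apply FormalMultilinearSeries.radius_eq_top_of_summable_norm
  intro r
  refine Summable.of_nonneg_of_le (fun n => by positivity) (fun n => ?_)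
    (Real.summable_pow_div_factorial r)
  rw [sincSeries, FormalMultilinearSeries.ofScalars_norm]
  have h1 : ‖(-1 : ℂ) ^ n / ((2 * n + 1).factorial : ℂ)‖ = (((2 * n + 1).factorial : ℝ))⁻¹ := by
    rw [norm_div, norm_pow, norm_neg, norm_one, one_pow]
    simp [Complex.norm_natCast]
  rw [h1, div_eq_mul_inv, mul_comm ((r : ℝ) ^ n)]
  apply mul_le_mul_of_nonneg_right _ (pow_nonneg r.coe_nonneg n)
  rw [inv_le_inv₀ (by positivity) (by positivity)]
  exact_mod_cast Nat.factorial_le (by omega)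

lemma sincSqrt_eq_sum (w : ℂ) : sincSqrt w = sincSeries.sum w := by
  rw [FormalMultilinearSeries.sum, sincSqrt]
  refine tsum_congr fun n => ?_
  rw [sincSeries, FormalMultilinearSeries.ofScalars_apply_eq, smul_eq_mul]
  ring

lemma sincSqrt_differentiable : Differentiable ℂ sincSqrt := by
  have h : Differentiable ℂ sincSeries.sum := by
    intro w
    have hball : w ∈ EMetric.ball (0 : ℂ) sincSeries.radius := by
      rw [sincSeries_radius]; exact EMetric.mem_ball.2 (by simp [edist_lt_top])
    exact ((sincSeries.hasFPowerSeriesOnBall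
      (by rw [sincSeries_radius]; exact ENNReal.zero_lt_top)).analyticAt_of_mem
      hball).differentiableAt
  rw [show sincSqrt = sincSeries.sum from funext sincSqrt_eq_sum]
  exact h

lemma cauchy_iteratedDeriv_bound {f : ℂ → ℂ} (hf : Differentiable ℂ f) (z : ℂ) {r M : ℝ}
    (hr : 0 < r) (hM : ∀ w ∈ Metric.closedBall z r, ‖f w‖ ≤ M) (n : ℕ) :
    ‖iteratedDeriv n f z‖ ≤ (n.factorial : ℝ) * M / r ^ n := by
  lift r to NNReal using hr.le with R hR
  have hR0 : 0 < R := by exact_mod_cast hr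
  have h := hf.hasFPowerSeriesOnBall z hR0
  set p := cauchyPowerSeries f z R with hp
  have hfact : (n.factorial : ℂ) • p n (fun _ => (1 : ℂ)) = iteratedDeriv n f z := by
    rw [iteratedDeriv_eq_iteratedFDeriv]
    rw [← h.factorial_smul (1 : ℂ) n]
    simp [nsmul_eq_mul]
  have habs : ‖iteratedDeriv n f z‖
      = (n.factorial : ℝ) * ‖p n (fun _ => (1 : ℂ))‖ := by
    rw [← hfact, smul_eq_mul, norm_mul, Complex.norm_natCast]
  rw [habs]
  have hop : ‖p n (fun _ => (1 : ℂ))‖ ≤ ‖p n‖ := by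
    calc ‖p n (fun _ => (1 : ℂ))‖ ≤ ‖p n‖ * ∏ _i : Fin n, ‖(1 : ℂ)‖ :=
      (p n).le_opNorm _
    _ = ‖p n‖ := by simp
  have hint : ∫ θ in (0 : ℝ)..2 * Real.pi, ‖f (circleMap z R θ)‖ ≤ (2 * Real.pi) * M := by
    have hb : ∀ θ ∈ Set.Icc (0 : ℝ) (2 * Real.pi), ‖f (circleMap z R θ)‖ ≤ M := by
      intro θ _
      apply hM
      have := circleMap_mem_sphere z R.coe_nonneg θ
      exact Metric.sphere_subset_closedBall this
    calc ∫ θ in (0 : ℝ)..2 * Real.pi, ‖f (circleMap z R θ)‖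
        ≤ ∫ _θ in (0 : ℝ)..2 * Real.pi, M := by
          apply intervalIntegral.integral_mono_on Real.two_pi_pos.le _ intervalIntegrable_const hb
          exact ((hf.continuous.norm.comp (continuous_circleMap z R)).intervalIntegrable _ _)
      _ = (2 * Real.pi) * M := by simp [mul_comm]
  have hM0 : 0 ≤ M := le_trans (norm_nonneg _) (hM z (Metric.mem_closedBall_self hr.le))
  have hnorm : ‖p n‖ ≤ M / R ^ n := by
    calc ‖p n‖ ≤ ((2 * Real.pi)⁻¹ * ∫ θ in (0 : ℝ)..2 * Real.pi, ‖f (circleMap z R θ)‖)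
        * |(R : ℝ)|⁻¹ ^ n := norm_cauchyPowerSeries_le f z R n
      _ ≤ M * |(R : ℝ)|⁻¹ ^ n := by
          apply mul_le_mul_of_nonneg_right _ (by positivity)
          rw [inv_mul_le_iff₀ Real.two_pi_pos]
          linarith [hint]
      _ = M / R ^ n := by
          rw [abs_of_nonneg R.coe_nonneg, inv_pow, div_eq_mul_inv]
  calc (n.factorial : ℝ) * ‖p n (fun _ => (1 : ℂ))‖
      ≤ (n.factorial : ℝ) * (M / R ^ n) := by
        apply mul_le_mul_of_nonneg_left (le_trans hop hnorm) (by positivity)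
    _ = (n.factorial : ℝ) * M / R ^ n := by ring

lemma key_geom (c δ a b : ℝ) (hδ : 0 < δ) (hc : 100 * δ < c)
    (ha : c - δ / 2 ≤ |a|) (hb : |b| ≤ δ) :
    Real.sqrt ((a ^ 2 - b ^ 2 - c ^ 2) ^ 2 + (2 * a * b) ^ 2)
      ≤ (a ^ 2 - b ^ 2 - c ^ 2) + 2 * (2.4336 * (δ * c)) := by
  have hc0 : 0 < c := by linarith
  have ha2 : (c - δ / 2) ^ 2 ≤ a ^ 2 := by
    have h0 : (0:ℝ) ≤ c - δ / 2 := by linarith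
    calc (c - δ / 2) ^ 2 ≤ |a| ^ 2 := by gcongr
      _ = a ^ 2 := sq_abs a
  have hb2 : b ^ 2 ≤ δ ^ 2 := by
    calc b ^ 2 = |b| ^ 2 := (sq_abs b).symm
      _ ≤ δ ^ 2 := pow_le_pow_left₀ (abs_nonneg b) hb 2
  have hXS : 0 ≤ (a ^ 2 - b ^ 2 - c ^ 2) + 2 * (2.4336 * (δ * c)) := by nlinarith
  have key : (a ^ 2 - b ^ 2 - c ^ 2) ^ 2 + (2 * a * b) ^ 2
      ≤ ((a ^ 2 - b ^ 2 - c ^ 2) + 2 * (2.4336 * (δ * c))) ^ 2 := by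
    have h2 : a ^ 2 * b ^ 2 ≤ a ^ 2 * δ ^ 2 :=
      mul_le_mul_of_nonneg_left hb2 (sq_nonneg a)
    have h1 : 0 ≤ (a ^ 2 - (c - δ / 2) ^ 2) * (2.4336 * (δ * c) - δ ^ 2) := by
      apply mul_nonneg (by linarith) (by nlinarith)
    nlinarith [h2, h1, hb2, sq_nonneg a,
      mul_nonneg (mul_nonneg hδ.le hδ.le)
        (mul_nonneg (by linarith : (0:ℝ) ≤ c - 100 * δ) hc0.le),
      mul_nonneg (mul_nonneg hδ.le hδ.le)
        (mul_nonneg (by linarith : (0:ℝ) ≤ c - 100 * δ) hδ.le),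
      mul_nonneg (mul_nonneg hδ.le hδ.le) (mul_nonneg hδ.le hc0.le),
      mul_nonneg (sq_nonneg a) (mul_nonneg hδ.le hc0.le)]
  calc Real.sqrt ((a ^ 2 - b ^ 2 - c ^ 2) ^ 2 + (2 * a * b) ^ 2)
      ≤ Real.sqrt (((a ^ 2 - b ^ 2 - c ^ 2) + 2 * (2.4336 * (δ * c))) ^ 2) :=
        Real.sqrt_le_sqrt key
    _ = _ := Real.sqrt_sq hXS


/-- The Logan function `ℓ_c(z) = (c/sinh c)·sin(√(z²-c²))/√(z²-c²)`
(entire extension). -/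
noncomputable def loganEll (c : ℝ) (z : ℂ) : ℂ :=
  (c / Real.sinh c) * sincSqrt (z ^ 2 - (c : ℂ) ^ 2)

/-- `ℓ_{c,ε}(z) = ℓ_c(εz)`. -/
noncomputable def loganEllE (c ε : ℝ) (z : ℂ) : ℂ := loganEll c (ε * z)

lemma im_sq_of_sq (ζ W : ℂ) (h : ζ ^ 2 = W) :
    ζ.im ^ 2 = (‖W‖ - W.re) / 2 := by
  have h1 : W.re = ζ.re ^ 2 - ζ.im ^ 2 := by
    rw [← h]; simp [pow_two, Complex.mul_re]
  have h2 : ‖W‖ = ζ.re ^ 2 + ζ.im ^ 2 := by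
    rw [← h, norm_pow, Complex.sq_norm, Complex.normSq_apply]; ring
  rw [h1, h2]; ring

lemma loganEllE_differentiable (c ε : ℝ) : Differentiable ℂ (loganEllE c ε) := by
  unfold loganEllE loganEll
  apply Differentiable.mul (differentiable_const _)
  apply sincSqrt_differentiable.comp
  apply Differentiable.sub _ (differentiable_const _)
  exact (differentiable_const (ε : ℂ)).mul differentiable_id |>.pow 2

lemma ball_bound (c ε δ : ℝ) (z w : ℂ) (hε : 0 < ε) (hεδ : ε ≤ δ) (hδ : δ < c / 100)
    (hre : c / ε ≤ |z.re|) (him : |z.im| ≤ 1 / 2)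
    (hw : w ∈ Metric.closedBall z (δ / (2 * ε))) :
    ‖loganEllE c ε w‖
      ≤ c * Real.exp (1.56 * Real.sqrt (δ * c)) / Real.sinh c := by
  have hδ0 : 0 < δ := lt_of_lt_of_le hε hεδ
  have hc0 : 0 < c := by linarith
  have hc100 : 100 * δ < c := by linarith
  set r := δ / (2 * ε) with hrdef
  have hr0 : 0 < r := by positivity
  have hεr : ε * r = δ / 2 := by rw [hrdef]; field_simp
  have hwz : ‖w - z‖ ≤ r := by
    rw [Metric.mem_closedBall, Complex.dist_eq] at hw; exact hw
  have hre' : |w.re - z.re| ≤ r := by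
    calc |w.re - z.re| = |(w - z).re| := by rw [Complex.sub_re]
      _ ≤ ‖w - z‖ := Complex.abs_re_le_norm _
      _ ≤ r := hwz
  have him' : |w.im| ≤ 1 / 2 + r := by
    calc |w.im| = |(w.im - z.im) + z.im| := by ring_nf
      _ ≤ |w.im - z.im| + |z.im| := abs_add_le _ _
      _ = |(w - z).im| + |z.im| := by rw [Complex.sub_im]
      _ ≤ ‖w - z‖ + 1 / 2 := by
          gcongr
          exact Complex.abs_im_le_norm _
      _ ≤ 1 / 2 + r := by linarith
  set a := ε * w.re with hadef
  set b := ε * w.im with hbdef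
  have ha : c - δ / 2 ≤ |a| := by
    have h1 : |z.re| - |w.re| ≤ |w.re - z.re| := by
      rw [abs_sub_comm]; exact abs_sub_abs_le_abs_sub _ _
    have h2 : c / ε - r ≤ |w.re| := by linarith
    have h3 : ε * (c / ε - r) ≤ ε * |w.re| := by
      apply mul_le_mul_of_nonneg_left h2 hε.le
    have h4 : ε * (c / ε - r) = c - δ / 2 := by
      rw [mul_sub, hεr, mul_div_cancel₀ _ hε.ne']
    rw [hadef, abs_mul, abs_of_pos hε]
    linarith
  have hb : |b| ≤ δ := by
    rw [hbdef, abs_mul, abs_of_pos hε]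
    have h1 : ε * |w.im| ≤ ε * (1 / 2 + r) := mul_le_mul_of_nonneg_left him' hε.le
    have h2 : ε * (1 / 2 + r) = ε / 2 + δ / 2 := by rw [mul_add, hεr]; ring
    linarith
  set W := ((ε : ℂ) * w) ^ 2 - (c : ℂ) ^ 2 with hWdef
  have hWre : W.re = a ^ 2 - b ^ 2 - c ^ 2 := by
    rw [hWdef, hadef, hbdef]
    simp [pow_two, Complex.mul_re, Complex.mul_im]
  have hWim : W.im = 2 * a * b := by
    rw [hWdef, hadef, hbdef]
    simp [pow_two, Complex.mul_re, Complex.mul_im]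
    ring
  have habsW : ‖W‖ ≤ W.re + 2 * (2.4336 * (δ * c)) := by
    have hk := key_geom c δ a b hδ0 hc100 ha hb
    rw [Complex.norm_def, Complex.normSq_apply]
    calc Real.sqrt (W.re * W.re + W.im * W.im)
        = Real.sqrt ((a ^ 2 - b ^ 2 - c ^ 2) ^ 2 + (2 * a * b) ^ 2) := by
          rw [hWre, hWim]; ring_nf
      _ ≤ (a ^ 2 - b ^ 2 - c ^ 2) + 2 * (2.4336 * (δ * c)) := hk
      _ = W.re + 2 * (2.4336 * (δ * c)) := by rw [hWre]
  obtain ⟨ζ, hζ⟩ := IsAlgClosed.exists_pow_nat_eq W (n := 2) (by norm_num)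
  have him2 := im_sq_of_sq ζ W hζ
  have hsq : ζ.im ^ 2 ≤ 2.4336 * (δ * c) := by rw [him2]; linarith
  have h156 : |ζ.im| ≤ 1.56 * Real.sqrt (δ * c) := by
    have hrr : (1.56 * Real.sqrt (δ * c)) ^ 2 = 2.4336 * (δ * c) := by
      rw [mul_pow, Real.sq_sqrt (by positivity)]; norm_num
    have h := Real.sqrt_le_sqrt (hsq.trans_eq hrr.symm)
    rwa [Real.sqrt_sq_eq_abs, Real.sqrt_sq (by positivity)] at h
  have hsinc : ‖sincSqrt W‖ ≤ Real.exp (1.56 * Real.sqrt (δ * c)) :=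
    (abs_sincSqrt_le W ζ hζ).trans (Real.exp_le_exp.2 h156)
  have hsinh : 0 < Real.sinh c := Real.sinh_pos_iff.2 hc0
  have hcs : 0 < c / Real.sinh c := div_pos hc0 hsinh
  unfold loganEllE loganEll
  rw [norm_mul, norm_div, Complex.norm_real, Complex.norm_real, Real.norm_eq_abs, Real.norm_eq_abs, abs_of_pos hc0, abs_of_pos hsinh]
  calc c / Real.sinh c * ‖sincSqrt (((ε : ℂ) * w) ^ 2 - (c : ℂ) ^ 2)‖
      ≤ c / Real.sinh c * Real.exp (1.56 * Real.sqrt (δ * c)) :=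
        mul_le_mul_of_nonneg_left hsinc hcs.le
    _ = c * Real.exp (1.56 * Real.sqrt (δ * c)) / Real.sinh c := by ring

theorem loganEll_deriv_bound
    (c ε δ : ℝ) (n : ℕ) (z : ℂ)
    (hε : 0 < ε) (hεδ : ε ≤ δ) (hδ : δ < c / 100)
    (hre : c / ε ≤ |z.re|) (him : |z.im| ≤ 1 / 2) :
    ‖iteratedDeriv n (loganEllE c ε) z‖
      ≤ (n.factorial : ℝ) * (c * Real.exp (1.56 * Real.sqrt (δ * c)) / Real.sinh c)
          * (2 * ε / δ) ^ n := by
  have hδ0 : 0 < δ := lt_of_lt_of_le hε hεδ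
  have hr0 : 0 < δ / (2 * ε) := by positivity
  have key := cauchy_iteratedDeriv_bound (loganEllE_differentiable c ε) z hr0
    (fun w hw => ball_bound c ε δ z w hε hεδ hδ hre him hw) n
  have heq : (n.factorial : ℝ) * (c * Real.exp (1.56 * Real.sqrt (δ * c)) / Real.sinh c)
      / (δ / (2 * ε)) ^ n
      = (n.factorial : ℝ) * (c * Real.exp (1.56 * Real.sqrt (δ * c)) / Real.sinh c)
          * (2 * ε / δ) ^ n := by
    rw [div_eq_mul_inv, ← inv_pow, inv_div]
  exact key.trans_eq heq
end

section
/- Let c > 0 and 0 < δ < c/100, and let ξ ∈ ℂ satisfy Re(ξ) ≥ c − δ and 0 ≤ Im(ξ) ≤ δ. Then |Im(√(ξ² − c²))| ≤ 1.56·√(δc), where √ denotes the principal branch of the complex square root. -/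
open scoped BigOperators

private lemma im_sqrt_bound_key (c δ x y : ℝ)
    (hc : 0 < c) (hδ0 : 0 < δ) (hδ : δ < c / 100)
    (hre : c - δ ≤ x) (him0 : 0 ≤ y) (him : y ≤ δ) :
    4 * x ^ 2 * y ^ 2 ≤ 2 * (4.8672 * (δ * c)) * (x ^ 2 - y ^ 2 - c ^ 2)
      + (4.8672 * (δ * c)) ^ 2 := by
  have hx0 : 0 < x := lt_of_lt_of_le (by linarith) hre
  have hx2 : (c - δ) ^ 2 ≤ x ^ 2 := by nlinarith
  have hy2 : y ^ 2 ≤ δ ^ 2 := by nlinarith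
  set K : ℝ := 4.8672 * (δ * c) with hKdef
  have hA : (c - δ) ^ 2 * (2 * K - 4 * y ^ 2) ≤ x ^ 2 * (2 * K - 4 * y ^ 2) :=
    mul_le_mul_of_nonneg_right hx2 (by nlinarith)
  have hB : y ^ 2 * (4 * (c - δ) ^ 2 + 2 * K) ≤ δ ^ 2 * (4 * (c - δ) ^ 2 + 2 * K) :=
    mul_le_mul_of_nonneg_right hy2 (by positivity)
  have hC : 0 ≤ δ ^ 2 * (4.22083584 * c ^ 2 - 4 * (c - δ) ^ 2) := by
    have h : 0 ≤ 4.22083584 * c ^ 2 - 4 * (c - δ) ^ 2 := by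
      nlinarith [mul_nonneg hδ0.le (by linarith : (0:ℝ) ≤ 2 * c - δ), sq_nonneg c]
    exact mul_nonneg (sq_nonneg δ) h
  nlinarith [hA, hB, hC]

private lemma im_sqrt_bound_repos (c δ x y : ℝ)
    (hc : 0 < c) (hδ0 : 0 < δ) (hδ : δ < c / 100)
    (hre : c - δ ≤ x) (him0 : 0 ≤ y) (him : y ≤ δ) :
    0 ≤ (x ^ 2 - y ^ 2 - c ^ 2) + 4.8672 * (δ * c) := by
  have hx0 : 0 < x := lt_of_lt_of_le (by linarith) hre
  have hx2 : (c - δ) ^ 2 ≤ x ^ 2 := by nlinarith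
  have hy2 : y ^ 2 ≤ δ ^ 2 := by nlinarith
  nlinarith [mul_pos hδ0 hc]

theorem im_sqrt_bound
    (c δ : ℝ) (ξ : ℂ)
    (hc : 0 < c) (hδ0 : 0 < δ) (hδ : δ < c / 100)
    (hre : c - δ ≤ ξ.re) (him0 : 0 ≤ ξ.im) (him : ξ.im ≤ δ) :
    |((ξ ^ 2 - (c : ℂ) ^ 2) ^ ((1 : ℂ) / 2)).im| ≤ 1.56 * Real.sqrt (δ * c) := by
  have hδc : 0 < δ * c := mul_pos hδ0 hc
  have hR : 0 ≤ 1.56 * Real.sqrt (δ * c) := by positivity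
  set z : ℂ := ξ ^ 2 - (c : ℂ) ^ 2 with hz
  by_cases h0 : z = 0
  · rw [h0, Complex.zero_cpow (by norm_num)]
    simpa using hR
  · set s := z ^ ((1 : ℂ) / 2) with hs
    have hss : s * s = z := by
      rw [hs, ← Complex.cpow_add _ _ h0]
      norm_num
    have habs : ‖s‖ ^ 2 = ‖z‖ := by
      rw [← hss, norm_mul, sq]
    have h1 : s.re ^ 2 - s.im ^ 2 = z.re := by
      rw [← hss]; simp [Complex.mul_re]; ring
    have h2 : s.re ^ 2 + s.im ^ 2 = ‖z‖ := by
      rw [← habs, Complex.sq_norm, Complex.normSq_apply]; ring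
    set x := ξ.re with hx
    set y := ξ.im with hy
    have hzre : z.re = x ^ 2 - y ^ 2 - c ^ 2 := by
      simp [hz, pow_two, Complex.mul_re, hx, hy]
    have hzim : z.im = 2 * x * y := by
      simp [hz, pow_two, Complex.mul_im]; ring
    set K : ℝ := 4.8672 * (δ * c) with hKdef
    have hkey : 4 * x ^ 2 * y ^ 2 ≤ 2 * K * (x ^ 2 - y ^ 2 - c ^ 2) + K ^ 2 :=
      im_sqrt_bound_key c δ x y hc hδ0 hδ hre him0 him
    have hrepos : 0 ≤ z.re + K := by
      rw [hzre]; exact im_sqrt_bound_repos c δ x y hc hδ0 hδ hre him0 him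
    have hK : ‖z‖ ≤ z.re + K := by
      rw [Complex.norm_def, Complex.normSq_apply]
      have hsq : z.re * z.re + z.im * z.im ≤ (z.re + K) ^ 2 := by
        rw [hzre, hzim]; nlinarith [hkey]
      calc Real.sqrt (z.re * z.re + z.im * z.im)
          ≤ Real.sqrt ((z.re + K) ^ 2) := Real.sqrt_le_sqrt hsq
        _ = z.re + K := Real.sqrt_sq hrepos
    have him2 : s.im ^ 2 ≤ (1.56 * Real.sqrt (δ * c)) ^ 2 := by
      have hsq : (1.56 * Real.sqrt (δ * c)) ^ 2 = 2.4336 * (δ * c) := by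
        rw [mul_pow, Real.sq_sqrt hδc.le]; ring
      rw [hsq]
      have hKval : K = 2 * (2.4336 * (δ * c)) := by rw [hKdef]; ring
      linarith
    calc |s.im| = Real.sqrt (s.im ^ 2) := (Real.sqrt_sq_eq_abs _).symm
      _ ≤ Real.sqrt ((1.56 * Real.sqrt (δ * c)) ^ 2) := Real.sqrt_le_sqrt him2
      _ = 1.56 * Real.sqrt (δ * c) := Real.sqrt_sq hR
end

section
/- Let x be a real number with log x > 200, let 0 < ε ≤ 1/2, and suppose that |ψ(t) − t| < ε·t for all t ≥ √x, where ψ is the Chebyshev function. Then ∑_{p > √x} 1/p² < 2(1+3ε)/(√x · log x), the sum running over primes p > √x. -/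
set_option maxHeartbeats 1000000


open scoped BigOperators

/-- The Chebyshev function `ψ(t) = ∑_{p^m ≤ t} log p = ∑_{n ≤ t} Λ(n)`. -/
noncomputable def chebyshevPsi (t : ℝ) : ℝ :=
  ∑ n ∈ Finset.Icc 1 ⌊t⌋₊, ArithmeticFunction.vonMangoldt n

private lemma chebyshevPsi_natCast (M : ℕ) :
    chebyshevPsi (M : ℝ) = ∑ n ∈ Finset.Icc 1 M, ArithmeticFunction.vonMangoldt n := by
  simp [chebyshevPsi, Nat.floor_natCast]

private lemma chebyshevPsi_succ (M : ℕ) :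
    chebyshevPsi ((M + 1 : ℕ) : ℝ)
      = chebyshevPsi (M : ℝ) + ArithmeticFunction.vonMangoldt (M + 1) := by
  rw [chebyshevPsi_natCast, chebyshevPsi_natCast, Finset.sum_Icc_succ_top (by omega)]

private lemma chebyshevPsi_nat_nonneg (M : ℕ) : 0 ≤ chebyshevPsi (M : ℝ) := by
  rw [chebyshevPsi_natCast]
  exact Finset.sum_nonneg fun n _ => ArithmeticFunction.vonMangoldt_nonneg

/-- Discrete Abel summation bound for `∑ Λ(n)/n²`. -/
private lemma lambda_abel (ε : ℝ) (hε0 : 0 ≤ ε) (N : ℕ)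
    (hub : ∀ M : ℕ, N + 1 ≤ M → chebyshevPsi (M : ℝ) ≤ (1 + ε) * M) :
    ∀ M : ℕ, N ≤ M →
      ∑ n ∈ Finset.Icc (N + 1) M, ArithmeticFunction.vonMangoldt n / (n : ℝ) ^ 2 ≤
        chebyshevPsi (M : ℝ) / ((M : ℝ) + 1) ^ 2
          + 2 * (1 + ε) * (1 / ((N : ℝ) + 1) - 1 / ((M : ℝ) + 1))
          - chebyshevPsi (N : ℝ) / ((N : ℝ) + 1) ^ 2 := by
  intro M hM
  induction M, hM using Nat.le_induction with
  | base =>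
      rw [Finset.Icc_eq_empty (by omega), Finset.sum_empty]
      have : chebyshevPsi (N : ℝ) / ((N : ℝ) + 1) ^ 2
          + 2 * (1 + ε) * (1 / ((N : ℝ) + 1) - 1 / ((N : ℝ) + 1))
          - chebyshevPsi (N : ℝ) / ((N : ℝ) + 1) ^ 2 = 0 := by ring
      linarith
  | succ M hM ih =>
      have hcast : ((M + 1 : ℕ) : ℝ) = (M : ℝ) + 1 := by push_cast; ring
      have hQub : chebyshevPsi ((M + 1 : ℕ) : ℝ) ≤ (1 + ε) * ((M : ℝ) + 1) := by
        rw [hcast]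
        have := hub (M + 1) (by omega)
        rwa [hcast] at this
      have hQ0 : 0 ≤ chebyshevPsi ((M + 1 : ℕ) : ℝ) := chebyshevPsi_nat_nonneg _
      set Q : ℝ := chebyshevPsi ((M + 1 : ℕ) : ℝ) with hQ_def
      set a : ℝ := (M : ℝ) + 1 with ha_def
      have ha0 : 0 < a := by positivity
      have ha1 : 0 < a + 1 := by positivity
      have hsum : ∑ n ∈ Finset.Icc (N + 1) (M + 1),
          ArithmeticFunction.vonMangoldt n / (n : ℝ) ^ 2
          = (∑ n ∈ Finset.Icc (N + 1) M, ArithmeticFunction.vonMangoldt n / (n : ℝ) ^ 2)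
            + ArithmeticFunction.vonMangoldt (M + 1) / ((M + 1 : ℕ) : ℝ) ^ 2 :=
        Finset.sum_Icc_succ_top (by omega) _
      have hψs : Q = chebyshevPsi (M : ℝ) + ArithmeticFunction.vonMangoldt (M + 1) :=
        chebyshevPsi_succ M
      -- key telescoping inequality
      have key : Q / a ^ 2 - Q / (a + 1) ^ 2 ≤ 2 * (1 + ε) / a - 2 * (1 + ε) / (a + 1) := by
        have e1 : Q / a ^ 2 - Q / (a + 1) ^ 2 = Q * (2 * a + 1) / (a ^ 2 * (a + 1) ^ 2) := by
          field_simp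
          ring
        have e2 : 2 * (1 + ε) / a - 2 * (1 + ε) / (a + 1)
            = 2 * (1 + ε) * a * (a + 1) / (a ^ 2 * (a + 1) ^ 2) := by
          field_simp
          ring
        rw [e1, e2]
        gcongr ?_ / _
        nlinarith [mul_le_mul_of_nonneg_right hQub (show (0:ℝ) ≤ 2 * a + 1 by linarith),
          mul_nonneg (mul_nonneg (show (0:ℝ) ≤ 1 + ε by linarith) ha0.le) ha0.le]
      have hLa : ArithmeticFunction.vonMangoldt (M + 1) / ((M + 1 : ℕ) : ℝ) ^ 2
          = Q / a ^ 2 - chebyshevPsi (M : ℝ) / a ^ 2 := by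
        rw [hψs, hcast]
        ring
      rw [hsum, hLa, hcast]
      have expand : 2 * (1 + ε) * (1 / ((N : ℝ) + 1) - 1 / (a + 1))
          = 2 * (1 + ε) * (1 / ((N : ℝ) + 1) - 1 / a) + (2 * (1 + ε) / a - 2 * (1 + ε) / (a + 1)) := by
        ring
      rw [expand]
      linarith [ih, key]

theorem prime_square_sum_bound
    (x ε : ℝ) (hx : 200 < Real.log x) (hε0 : 0 < ε) (hε : ε ≤ 1 / 2)
    (hψ : ∀ t : ℝ, Real.sqrt x ≤ t → |chebyshevPsi t - t| < ε * t) :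
    (∑' p : Nat.Primes, if Real.sqrt x < ((p : ℕ) : ℝ) then 1 / ((p : ℕ) : ℝ) ^ 2 else 0)
      < 2 * (1 + 3 * ε) / (Real.sqrt x * Real.log x) := by
  classical
  set y := Real.sqrt x with hy_def
  -- x is positive
  have hx0 : 0 < x := by
    by_contra h
    push_neg at h
    have h0 : y = 0 := Real.sqrt_eq_zero'.mpr h
    have := hψ 0 (by rw [h0])
    simp [chebyshevPsi] at this
  have hy0 : 0 < y := Real.sqrt_pos.mpr hx0
  have hlogy : Real.log y = Real.log x / 2 := Real.log_sqrt hx0.le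
  have hy1 : 1 < y := by
    by_contra h
    push_neg at h
    have := Real.log_nonpos hy0.le h
    rw [hlogy] at this
    linarith
  set N := ⌊y⌋₊ with hN_def
  have hNy : (N : ℝ) ≤ y := Nat.floor_le hy0.le
  have hyN1 : y < (N : ℝ) + 1 := Nat.lt_floor_add_one y
  have hN1 : 1 ≤ N := Nat.le_floor (by exact_mod_cast hy1.le)
  have hz0 : (0 : ℝ) < (N : ℝ) + 1 := by positivity
  set L := Real.log ((N : ℝ) + 1) with hL_def
  have hLlog : Real.log x / 2 < L := by
    rw [← hlogy]
    exact Real.log_lt_log hy0 hyN1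
  have hL0 : 0 < L := lt_trans (by linarith) hLlog
  -- upper bound on ψ at integers > N
  have hub : ∀ M : ℕ, N + 1 ≤ M → chebyshevPsi (M : ℝ) ≤ (1 + ε) * M := by
    intro M hM
    have hyM : y ≤ (M : ℝ) := le_trans hyN1.le (by exact_mod_cast hM)
    have h := hψ (M : ℝ) hyM
    rw [abs_lt] at h
    nlinarith [h.2]
  -- lower bound on ψ(N)
  have hpsiN : (1 - ε) * y ≤ chebyshevPsi (N : ℝ) := by
    have h := hψ y le_rfl
    rw [abs_lt] at h
    have hEq : chebyshevPsi (N : ℝ) = chebyshevPsi y := by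
      unfold chebyshevPsi
      rw [Nat.floor_natCast]
    rw [hEq]
    nlinarith [h.1]
  set C := (1 + 3 * ε) / y with hC_def
  have hC0 : 0 < C := div_pos (by linarith) hy0
  -- key inequality A ≤ C
  have hAC : 2 * (1 + ε) / ((N : ℝ) + 1) - chebyshevPsi (N : ℝ) / ((N : ℝ) + 1) ^ 2 ≤ C := by
    have h1 : (1 - ε) * y / ((N : ℝ) + 1) ^ 2 ≤ chebyshevPsi (N : ℝ) / ((N : ℝ) + 1) ^ 2 := by
      gcongr
    have h2 : 2 * (1 + ε) / ((N : ℝ) + 1) - (1 - ε) * y / ((N : ℝ) + 1) ^ 2 ≤ C := by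
      have hkey : (2 * (1 + ε) * ((N : ℝ) + 1) - (1 - ε) * y) * y
          ≤ (1 + 3 * ε) * ((N : ℝ) + 1) ^ 2 := by
        nlinarith [mul_nonneg (mul_nonneg hε0.le hy0.le) (sub_nonneg.2 hyN1.le),
          sq_nonneg ((N : ℝ) + 1 - y), mul_nonneg hε0.le (sq_nonneg ((N : ℝ) + 1 - y))]
      have e : 2 * (1 + ε) / ((N : ℝ) + 1) - (1 - ε) * y / ((N : ℝ) + 1) ^ 2
          = (2 * (1 + ε) * ((N : ℝ) + 1) - (1 - ε) * y) / ((N : ℝ) + 1) ^ 2 := by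
        field_simp
      rw [hC_def, e, div_le_div_iff₀ (by positivity) hy0]
      exact hkey
    linarith
  -- bound on partial Λ sums
  have hbound : ∀ M : ℕ, ∑ n ∈ Finset.Icc (N + 1) M,
      ArithmeticFunction.vonMangoldt n / (n : ℝ) ^ 2 ≤ C := by
    intro M
    rcases lt_or_ge M (N + 1) with h | h
    · rw [Finset.Icc_eq_empty (by omega), Finset.sum_empty]
      exact hC0.le
    · have hNM : N ≤ M := by omega
      have habel := lambda_abel ε hε0.le N hub M hNM
      have hb0 : (0 : ℝ) < (M : ℝ) + 1 := by positivity
      have hMub : chebyshevPsi (M : ℝ) ≤ (1 + ε) * M := hub M h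
      have h2 : chebyshevPsi (M : ℝ) / ((M : ℝ) + 1) ^ 2 ≤ (1 + ε) / ((M : ℝ) + 1) := by
        rw [div_le_div_iff₀ (by positivity) hb0]
        nlinarith [Nat.cast_nonneg (α := ℝ) M]
      have h3 : (0 : ℝ) ≤ (1 + ε) / ((M : ℝ) + 1) := by positivity
      have h4 : 2 * (1 + ε) * (1 / ((N : ℝ) + 1) - 1 / ((M : ℝ) + 1))
          = 2 * (1 + ε) / ((N : ℝ) + 1) - 2 * (1 + ε) / ((M : ℝ) + 1) := by ring
      rw [h4] at habel
      have h5 : (1 + ε) / ((M : ℝ) + 1) ≤ 2 * (1 + ε) / ((M : ℝ) + 1) := by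
        rw [div_le_div_iff₀ hb0 hb0]
        nlinarith
      linarith
  -- finite sums over primes are bounded by C / L
  have hfin : ∀ s : Finset Nat.Primes,
      ∑ p ∈ s, (if y < ((p : ℕ) : ℝ) then 1 / ((p : ℕ) : ℝ) ^ 2 else 0) ≤ C / L := by
    intro s
    set t := (s.filter (fun p : Nat.Primes => y < ((p : ℕ) : ℝ))).image
      (fun p : Nat.Primes => (p : ℕ)) with ht_def
    have htmem : ∀ n ∈ t, N + 1 ≤ n ∧ n.Prime := by
      intro n hn
      rw [ht_def, Finset.mem_image] at hn
      obtain ⟨p, hp, rfl⟩ := hn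
      rw [Finset.mem_filter] at hp
      have : (N : ℝ) < ((p : ℕ) : ℝ) := lt_of_le_of_lt hNy hp.2
      have : N < (p : ℕ) := by exact_mod_cast this
      exact ⟨by omega, p.prop⟩
    have step1 : ∑ p ∈ s, (if y < ((p : ℕ) : ℝ) then 1 / ((p : ℕ) : ℝ) ^ 2 else 0)
        = ∑ n ∈ t, 1 / (n : ℝ) ^ 2 := by
      rw [ht_def, Finset.sum_image (g := fun p : Nat.Primes => (p : ℕ)) (fun p _ q _ h => Nat.Primes.coe_nat_injective h),
        Finset.sum_filter]
    have step2 : ∑ n ∈ t, 1 / (n : ℝ) ^ 2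
        ≤ ∑ n ∈ t, (ArithmeticFunction.vonMangoldt n / (n : ℝ) ^ 2) / L := by
      apply Finset.sum_le_sum
      intro n hn
      obtain ⟨hn1, hnp⟩ := htmem n hn
      have hn0 : (0 : ℝ) < (n : ℝ) := by
        have := hnp.pos
        exact_mod_cast this
      have hΛ : ArithmeticFunction.vonMangoldt n = Real.log n :=
        ArithmeticFunction.vonMangoldt_apply_prime hnp
      have hLn : L ≤ Real.log n := by
        rw [hL_def]
        apply Real.log_le_log hz0
        exact_mod_cast hn1
      have h1 : (1 : ℝ) ≤ ArithmeticFunction.vonMangoldt n / L := by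
        rw [le_div_iff₀ hL0, one_mul, hΛ]
        exact hLn
      calc 1 / (n : ℝ) ^ 2 = 1 * (1 / (n : ℝ) ^ 2) := by ring
        _ ≤ (ArithmeticFunction.vonMangoldt n / L) * (1 / (n : ℝ) ^ 2) :=
            mul_le_mul_of_nonneg_right h1 (by positivity)
        _ = (ArithmeticFunction.vonMangoldt n / (n : ℝ) ^ 2) / L := by ring
    have step3 : ∑ n ∈ t, ArithmeticFunction.vonMangoldt n / (n : ℝ) ^ 2
        ≤ ∑ n ∈ Finset.Icc (N + 1) (t.sup id), ArithmeticFunction.vonMangoldt n / (n : ℝ) ^ 2 := by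
      apply Finset.sum_le_sum_of_subset_of_nonneg
      · intro n hn
        rw [Finset.mem_Icc]
        exact ⟨(htmem n hn).1, Finset.le_sup (f := id) hn⟩
      · intro n _ _
        have := ArithmeticFunction.vonMangoldt_nonneg (n := n)
        positivity
    calc ∑ p ∈ s, (if y < ((p : ℕ) : ℝ) then 1 / ((p : ℕ) : ℝ) ^ 2 else 0)
        = ∑ n ∈ t, 1 / (n : ℝ) ^ 2 := step1
      _ ≤ ∑ n ∈ t, (ArithmeticFunction.vonMangoldt n / (n : ℝ) ^ 2) / L := step2
      _ = (∑ n ∈ t, ArithmeticFunction.vonMangoldt n / (n : ℝ) ^ 2) / L := by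
          rw [Finset.sum_div]
      _ ≤ C / L := by
          have h := le_trans step3 (hbound _)
          exact div_le_div_of_nonneg_right h hL0.le
  have hT : (∑' p : Nat.Primes, if y < ((p : ℕ) : ℝ) then 1 / ((p : ℕ) : ℝ) ^ 2 else 0)
      ≤ C / L := tsum_le_of_sum_le' (by positivity) hfin
  have hfinal : C / L < 2 * (1 + 3 * ε) / (y * Real.log x) := by
    have h1 : C / L < C / (Real.log x / 2) :=
      div_lt_div_of_pos_left hC0 (by linarith) hLlog
    have h2 : C / (Real.log x / 2) = 2 * (1 + 3 * ε) / (y * Real.log x) := by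
      rw [hC_def]
      field_simp
    rw [h2] at h1
    exact h1
  exact lt_of_le_of_lt hT hfinal
end

section
/- For every real x > 1, ∑_{3 ≤ m ≤ log x} ∑_{p : p^m ≥ x} 1/(m p^m) ≤ (log x)/x + (ζ(2) − 1)·x^{−2/3}, where the inner sum runs over primes p with p^m ≥ x and the outer sum over integers m with 3 ≤ m ≤ log x. -/
open scoped BigOperators

lemma aux_tele (k : ℕ) (t : ℝ) (ht : 1 ≤ t) :
    ((k : ℝ) + 2) / (t + 1) ^ (k + 3) ≤ 1 / t ^ (k + 2) - 1 / (t + 1) ^ (k + 2) := by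
  have ht0 : (0:ℝ) < t := by linarith
  have ht1 : (0:ℝ) < t + 1 := by linarith
  have hinv : (0:ℝ) ≤ 1 / t := by positivity
  have hBer : 1 + ((k : ℝ) + 2) * (1 / t) ≤ (1 + 1 / t) ^ (k + 2) := by
    have h := one_add_mul_le_pow (show (-2:ℝ) ≤ 1 / t by linarith) (k + 2)
    push_cast at h
    exact h
  have key : t ^ (k + 2) + ((k : ℝ) + 2) * t ^ (k + 1) ≤ (t + 1) ^ (k + 2) := by
    have h2 : t * (1 + 1 / t) = t + 1 := by field_simp
    calc t ^ (k + 2) + ((k : ℝ) + 2) * t ^ (k + 1)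
        = t ^ (k + 2) * (1 + ((k : ℝ) + 2) * (1 / t)) := by
          field_simp
          ring
      _ ≤ t ^ (k + 2) * (1 + 1 / t) ^ (k + 2) := by
          apply mul_le_mul_of_nonneg_left hBer (by positivity)
      _ = (t + 1) ^ (k + 2) := by rw [← mul_pow, h2]
  have h3 : ((k : ℝ) + 2) / (t + 1) ^ (k + 3) ≤
      ((k : ℝ) + 2) * t ^ (k + 1) / (t ^ (k + 2) * (t + 1) ^ (k + 2)) := by
    rw [div_le_div_iff₀ (by positivity) (by positivity)]
    have e1 : (t + 1) ^ (k + 3) = (t + 1) ^ (k + 2) * (t + 1) := by ring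
    have e2 : t ^ (k + 2) = t ^ (k + 1) * t := by ring
    rw [e1, e2]
    have hp1 : (0:ℝ) ≤ ((k : ℝ) + 2) * t ^ (k + 1) * (t + 1) ^ (k + 2) := by positivity
    nlinarith [hp1]
  refine h3.trans ?_
  rw [div_sub_div _ _ (by positivity : (t:ℝ) ^ (k + 2) ≠ 0)
    (by positivity : ((t:ℝ) + 1) ^ (k + 2) ≠ 0), one_mul, mul_one]
  gcongr
  linarith

lemma sum_recip_strong (N : ℕ) (hN : 2 ≤ N) :
    ∑ m ∈ Finset.Icc 3 N, 1 / ((m : ℝ) * ((m : ℝ) - 1)) ≤ 1 / 2 - 1 / (N : ℝ) := by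
  induction N, hN using Nat.le_induction with
  | base => rw [Finset.Icc_eq_empty (by omega)]; norm_num
  | succ n hn ih =>
    rw [Finset.sum_Icc_succ_top (by omega : 3 ≤ n + 1)]
    have hn0 : (0:ℝ) < (n : ℝ) := by exact_mod_cast (by omega : 0 < n)
    have e : (1:ℝ) / ((((n+1 : ℕ)) : ℝ) * ((((n+1:ℕ)) : ℝ) - 1)) = 1 / (n:ℝ) - 1 / ((n:ℝ)+1) := by
      push_cast
      have h1 : ((n:ℝ)+1) ≠ 0 := by positivity
      have h2 : (n:ℝ) ≠ 0 := ne_of_gt hn0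
      field_simp
      ring_nf
      exact mul_inv_cancel₀ h2
    rw [e]
    push_cast
    linarith

lemma sum_recip (N : ℕ) :
    ∑ m ∈ Finset.Icc 3 N, 1 / ((m : ℝ) * ((m : ℝ) - 1)) ≤ 1 / 2 := by
  rcases le_or_gt 2 N with h | h
  · have := sum_recip_strong N h
    have : (0:ℝ) ≤ 1 / (N : ℝ) := by positivity
    linarith [sum_recip_strong N h]
  · rw [Finset.Icc_eq_empty (by omega)]; norm_num

lemma inner_bound (x : ℝ) (hx : 1 < x) (m : ℕ) (hm : 3 ≤ m) :
    (∑' p : Nat.Primes,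
        if x ≤ ((p : ℕ) : ℝ) ^ m then 1 / ((m : ℝ) * ((p : ℕ) : ℝ) ^ m) else 0)
      ≤ 1 / x + 1 / ((m : ℝ) * ((m : ℝ) - 1)) * x ^ (-(2 : ℝ) / 3) := by
  obtain ⟨k, rfl⟩ : ∃ k, m = k + 3 := ⟨m - 3, by omega⟩
  have hx0 : (0:ℝ) < x := by linarith
  set M := k + 3 with hM
  have hM1 : (1:ℝ) ≤ (M:ℝ) := by exact_mod_cast (by omega : 1 ≤ M)
  have hMsub : (M:ℝ) - 1 = (k:ℝ) + 2 := by simp only [hM]; push_cast; ring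
  set g : ℕ → ℝ := fun n => if 2 ≤ n ∧ x ≤ (n:ℝ) ^ M then 1 / ((M:ℝ) * (n:ℝ) ^ M) else 0
    with hgdef
  have hg0 : ∀ n, 0 ≤ g n := by
    intro n
    simp only [hgdef]
    split
    · positivity
    · exact le_refl 0
  have hgsum : Summable g := by
    have hb : Summable (fun n : ℕ => 1 / (n:ℝ) ^ 2) :=
      Real.summable_one_div_nat_pow.mpr one_lt_two
    have hle : ∀ n : ℕ, g n ≤ 1 / (n:ℝ) ^ 2 := by
      intro n
      simp only [hgdef]
      split
      case isTrue h =>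
        obtain ⟨h2, hxn⟩ := h
        have hn1 : (1:ℝ) ≤ (n:ℝ) := by exact_mod_cast (by omega : 1 ≤ n)
        have hpow : (n:ℝ) ^ 2 ≤ (n:ℝ) ^ M := pow_le_pow_right₀ hn1 (by omega)
        have hle2 : (n:ℝ) ^ 2 ≤ (M:ℝ) * (n:ℝ) ^ M := by
          nlinarith [pow_nonneg (by linarith : (0:ℝ) ≤ (n:ℝ)) M]
        exact one_div_le_one_div_of_le (by positivity) hle2
      case isFalse h => positivity
    exact hb.of_nonneg_of_le hg0 hle
  have hfg : ∀ p : Nat.Primes,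
      (if x ≤ ((p:ℕ):ℝ) ^ M then 1 / ((M:ℝ) * ((p:ℕ):ℝ) ^ M) else 0) = g (p:ℕ) := by
    intro p
    have h2 : 2 ≤ (p:ℕ) := p.2.two_le
    simp only [hgdef, h2, true_and]
  have hfsum : Summable (fun p : Nat.Primes =>
      if x ≤ ((p:ℕ):ℝ) ^ M then 1 / ((M:ℝ) * ((p:ℕ):ℝ) ^ M) else 0) :=
    ((hgsum.comp_injective Subtype.coe_injective).congr fun p => (hfg p).symm)
  have hcmp : (∑' p : Nat.Primes,
      if x ≤ ((p:ℕ):ℝ) ^ M then 1 / ((M:ℝ) * ((p:ℕ):ℝ) ^ M) else 0) ≤ ∑' n, g n :=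
    Summable.tsum_le_tsum_of_inj (fun p : Nat.Primes => (p:ℕ)) Subtype.coe_injective
      (fun c _ => hg0 c) (fun p => le_of_eq (hfg p)) hfsum hgsum
  refine hcmp.trans ?_
  -- set up n₀
  set y := x ^ ((M:ℝ))⁻¹ with hy
  have hy0 : 0 < y := Real.rpow_pos_of_pos hx0 _
  have hy1 : 1 ≤ y := by
    rw [hy, show (1:ℝ) = 1 ^ ((M:ℝ))⁻¹ from (Real.one_rpow _).symm]
    exact Real.rpow_le_rpow zero_le_one hx.le (by positivity)
  set n₀ := max 2 ⌈y⌉₊ with hn₀def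
  have hn₀2 : 2 ≤ n₀ := le_max_left _ _
  have hn₀y : y ≤ (n₀:ℝ) := le_trans (Nat.le_ceil y)
    (by exact_mod_cast le_max_right 2 ⌈y⌉₊)
  have hn₀0 : (0:ℝ) < (n₀:ℝ) := by linarith
  have hyMx : y ^ M = x := by
    rw [hy, ← Real.rpow_natCast (x ^ ((M:ℝ))⁻¹) M, ← Real.rpow_mul hx0.le,
      inv_mul_cancel₀ (by exact_mod_cast (by omega : M ≠ 0) : (M:ℝ) ≠ 0), Real.rpow_one]
  have hn₀x : x ≤ (n₀:ℝ) ^ M := by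
    rw [← hyMx]; exact pow_le_pow_left₀ hy0.le hn₀y M
  have hvan : ∀ n ∈ Finset.range n₀, g n = 0 := by
    intro n hn
    rw [Finset.mem_range] at hn
    simp only [hgdef]
    rw [if_neg]
    rintro ⟨h2, hxn⟩
    have hlt : n < ⌈y⌉₊ := (lt_max_iff.mp hn).resolve_left (by omega)
    have hny : (n:ℝ) < y := Nat.lt_ceil.mp hlt
    have : (n:ℝ) ^ M < x := by
      rw [← hyMx]; exact pow_lt_pow_left₀ hny (Nat.cast_nonneg n) (by omega)
    linarith
  have hsplit := Summable.sum_add_tsum_nat_add n₀ hgsum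
  rw [Finset.sum_eq_zero hvan, zero_add] at hsplit
  have hsum2 : Summable fun i => g (i + n₀) := (summable_nat_add_iff n₀).mpr hgsum
  rw [← hsplit, Summable.tsum_eq_zero_add hsum2]
  have hcond : ∀ i : ℕ, g (i + n₀) = 1 / ((M:ℝ) * ((i + n₀ : ℕ):ℝ) ^ M) := by
    intro i
    simp only [hgdef]
    rw [if_pos]
    constructor
    · omega
    · refine hn₀x.trans (pow_le_pow_left₀ hn₀0.le ?_ M)
      exact_mod_cast Nat.le_add_left n₀ i
  -- head bound
  have hhead : g (0 + n₀) ≤ 1 / x := by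
    rw [hcond 0]
    apply one_div_le_one_div_of_le hx0
    have h1 : x ≤ ((0 + n₀ : ℕ):ℝ) ^ M := by
      refine hn₀x.trans (pow_le_pow_left₀ hn₀0.le ?_ M)
      exact_mod_cast Nat.le_add_left n₀ 0
    nlinarith [pow_nonneg (show (0:ℝ) ≤ ((0 + n₀ : ℕ):ℝ) from Nat.cast_nonneg _) M]
  -- tail bound
  set F : ℕ → ℝ := fun j => 1 / ((M:ℝ) * ((M:ℝ) - 1) * (j:ℝ) ^ (k + 2)) with hFdef
  have hpt : ∀ i : ℕ, g (i + 1 + n₀) ≤ F (i + n₀) - F (i + 1 + n₀) := by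
    intro i
    have hge2 : 2 ≤ i + n₀ := by omega
    set t : ℝ := ((i + n₀ : ℕ):ℝ) with htdef
    have ht1 : 1 ≤ t := by
      rw [htdef]; exact_mod_cast (by omega : 1 ≤ i + n₀)
    have ht0 : 0 < t := by linarith
    have hcast : ((i + 1 + n₀ : ℕ):ℝ) = t + 1 := by rw [htdef]; push_cast; ring
    have haux := aux_tele k t ht1
    rw [hcond (i + 1), hFdef]
    simp only
    rw [hcast, hMsub]
    have hk2 : (0:ℝ) < (k:ℝ) + 2 := by positivity
    have hMpos : (0:ℝ) < (M:ℝ) := by linarith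
    have hmul := mul_le_mul_of_nonneg_left haux
      (le_of_lt (by positivity : (0:ℝ) < 1 / ((M:ℝ) * ((k:ℝ) + 2))))
    have e1 : 1 / ((M:ℝ) * ((k:ℝ) + 2)) * (((k:ℝ) + 2) / (t + 1) ^ (k + 3)) =
        1 / ((M:ℝ) * (t + 1) ^ (k + 3)) := by
      field_simp
    have e2 : 1 / ((M:ℝ) * ((k:ℝ) + 2)) * (1 / t ^ (k + 2) - 1 / (t + 1) ^ (k + 2)) =
        1 / ((M:ℝ) * ((k:ℝ) + 2) * t ^ (k + 2)) -
          1 / ((M:ℝ) * ((k:ℝ) + 2) * (t + 1) ^ (k + 2)) := by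
      rw [mul_sub]
      congr 1 <;> · field_simp; try ring
    rw [e1, e2] at hmul
    exact hmul
  have hFnonneg : ∀ j : ℕ, 0 ≤ F j := by
    intro j
    simp only [hFdef]
    rw [hMsub]
    positivity
  have htel : ∀ K : ℕ, ∑ i ∈ Finset.range K, g (i + 1 + n₀) ≤ F n₀ := by
    intro K
    calc ∑ i ∈ Finset.range K, g (i + 1 + n₀)
        ≤ ∑ i ∈ Finset.range K, (F (i + n₀) - F (i + 1 + n₀)) :=
          Finset.sum_le_sum fun i _ => hpt i
      _ = F (0 + n₀) - F (K + n₀) := Finset.sum_range_sub' (fun i => F (i + n₀)) K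
      _ ≤ F n₀ := by simpa using sub_le_self (F (0 + n₀)) (hFnonneg (K + n₀))
  have htail : (∑' i : ℕ, g (i + 1 + n₀)) ≤ F n₀ :=
    Real.tsum_le_of_sum_range_le (fun i => hg0 _) htel
  refine add_le_add hhead (htail.trans ?_)
  -- F n₀ ≤ 1/(M(M-1)) * x^(-2/3)
  have hM3 : (M:ℝ) = (k:ℝ) + 3 := by simp only [hM]; push_cast; ring
  have hx23 : x ^ ((2:ℝ)/3) ≤ (n₀:ℝ) ^ (k + 2) := by
    have h1 : y ^ (k + 2) ≤ (n₀:ℝ) ^ (k + 2) := pow_le_pow_left₀ hy0.le hn₀y _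
    have h2 : y ^ (k + 2) = x ^ ((M:ℝ)⁻¹ * ((k:ℝ) + 2)) := by
      rw [hy, ← Real.rpow_natCast (x ^ ((M:ℝ))⁻¹) (k + 2), ← Real.rpow_mul hx0.le]
      push_cast
      ring_nf
    have h3 : (2:ℝ)/3 ≤ (M:ℝ)⁻¹ * ((k:ℝ) + 2) := by
      rw [hM3, inv_mul_eq_div, le_div_iff₀ (by positivity)]
      have : (0:ℝ) ≤ (k:ℝ) := Nat.cast_nonneg k
      linarith
    calc x ^ ((2:ℝ)/3) ≤ x ^ ((M:ℝ)⁻¹ * ((k:ℝ) + 2)) :=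
          Real.rpow_le_rpow_of_exponent_le hx.le h3
      _ = y ^ (k + 2) := h2.symm
      _ ≤ _ := h1
  have hx23pos : 0 < x ^ ((2:ℝ)/3) := Real.rpow_pos_of_pos hx0 _
  have hneg : x ^ (-(2:ℝ)/3) = 1 / x ^ ((2:ℝ)/3) := by
    rw [show -(2:ℝ)/3 = -((2:ℝ)/3) by ring, Real.rpow_neg hx0.le, one_div]
  have hMM : (0:ℝ) < (M:ℝ) * ((M:ℝ) - 1) := by rw [hMsub]; positivity
  simp only [hFdef]
  rw [hneg, div_mul_div_comm, one_mul]
  apply one_div_le_one_div_of_le (by positivity)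
  exact mul_le_mul_of_nonneg_left hx23 hMM.le

theorem middle_prime_power_sum_bound (x : ℝ) (hx : 1 < x) :
    (∑ m ∈ Finset.Icc 3 ⌊Real.log x⌋₊,
        ∑' p : Nat.Primes,
          if x ≤ ((p : ℕ) : ℝ) ^ m then 1 / ((m : ℝ) * ((p : ℕ) : ℝ) ^ m) else 0)
      ≤ Real.log x / x + (Real.pi ^ 2 / 6 - 1) * x ^ (-(2 : ℝ) / 3) := by
  have hx0 : (0:ℝ) < x := by linarith
  have hlog : 0 ≤ Real.log x := Real.log_nonneg hx.le
  set N := ⌊Real.log x⌋₊ with hN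
  have hNlog : (N:ℝ) ≤ Real.log x := Nat.floor_le hlog
  have hx23 : (0:ℝ) ≤ x ^ (-(2:ℝ)/3) := (Real.rpow_pos_of_pos hx0 _).le
  calc (∑ m ∈ Finset.Icc 3 N,
        ∑' p : Nat.Primes,
          if x ≤ ((p : ℕ) : ℝ) ^ m then 1 / ((m : ℝ) * ((p : ℕ) : ℝ) ^ m) else 0)
      ≤ ∑ m ∈ Finset.Icc 3 N, (1/x + 1/((m:ℝ)*((m:ℝ)-1)) * x ^ (-(2:ℝ)/3)) := by
        apply Finset.sum_le_sum
        intro m hm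
        exact inner_bound x hx m (Finset.mem_Icc.mp hm).1
    _ = ((Finset.Icc 3 N).card : ℝ) * (1/x)
        + (∑ m ∈ Finset.Icc 3 N, 1/((m:ℝ)*((m:ℝ)-1))) * x ^ (-(2:ℝ)/3) := by
        rw [Finset.sum_add_distrib, Finset.sum_const, nsmul_eq_mul, ← Finset.sum_mul]
    _ ≤ Real.log x * (1/x) + (1/2) * x ^ (-(2:ℝ)/3) := by
        apply add_le_add
        · apply mul_le_mul_of_nonneg_right ?_ (by positivity)
          have hc : (Finset.Icc 3 N).card = N + 1 - 3 := Nat.card_Icc 3 N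
          calc ((Finset.Icc 3 N).card : ℝ) ≤ (N:ℝ) := by
                rw [hc]; exact_mod_cast (by omega : N + 1 - 3 ≤ N)
            _ ≤ Real.log x := hNlog
        · exact mul_le_mul_of_nonneg_right (sum_recip N) hx23
    _ ≤ Real.log x / x + (Real.pi ^ 2 / 6 - 1) * x ^ (-(2:ℝ)/3) := by
        apply add_le_add
        · rw [mul_one_div]
        · apply mul_le_mul_of_nonneg_right ?_ hx23
          nlinarith [Real.pi_gt_three]
end

section
/- For every real x > 1, the improper integral ∫₁^∞ ( x^{1−r}/(1−r) − ζ'(r)/ζ(r) ) dr, understood as lim_{δ→0⁺} ∫_{1+δ}^∞ ( x^{1−r}/(1−r) − ζ'(r)/ζ(r) ) dr, exists and equals log log x + C₀. -/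
open scoped BigOperators
open MeasureTheory Set Filter Topology

namespace MainTermAux

local notation "γ" => Real.eulerMascheroniConstant

/-- Exponential integral tail. -/
noncomputable def E (a : ℝ) : ℝ := ∫ t in Ioi a, Real.exp (-t) / t

/-- Real zeta. -/
noncomputable def Z (σ : ℝ) : ℝ := ∑' n : ℕ, 1 / (n : ℝ) ^ σ

lemma E_integrableOn {a : ℝ} (ha : 0 < a) :
    IntegrableOn (fun t => Real.exp (-t) / t) (Ioi a) := by
  have hmeas : AEStronglyMeasurable (fun t => Real.exp (-t) / t)
      (volume.restrict (Ioi a)) := by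
    refine (ContinuousOn.div ?_ continuousOn_id ?_).aestronglyMeasurable measurableSet_Ioi
    · exact (Real.continuous_exp.comp continuous_neg).continuousOn
    · intro t ht; exact ne_of_gt (lt_trans ha ht)
  refine Integrable.mono' (((exp_neg_integrableOn_Ioi a one_pos).const_mul a⁻¹)) hmeas ?_
  filter_upwards [ae_restrict_mem measurableSet_Ioi] with t ht
  have ht0 : 0 < t := lt_trans ha ht
  rw [Real.norm_eq_abs, abs_of_nonneg (by positivity)]
  rw [div_le_iff₀ ht0] at *
  have : Real.exp (-t) ≤ a⁻¹ * Real.exp (-1 * t) * t := by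
    rw [neg_one_mul]
    rw [mul_comm (a⁻¹ * Real.exp (-t)) t, ← mul_assoc]
    have : 1 ≤ t * a⁻¹ := by
      rw [← div_eq_mul_inv, le_div_iff₀ ha]; linarith [show a < t from ht]
    nlinarith [Real.exp_pos (-t)]
  exact this

lemma abs_log_le {t : ℝ} (ht : 0 < t) :
    |Real.log t| ≤ t + 2 * t ^ (-(2:ℝ)⁻¹) := by
  have h2 : (0:ℝ) < t ^ (-(2:ℝ)⁻¹) := Real.rpow_pos_of_pos ht _
  rcases le_or_gt 1 t with h1 | h1
  · rw [abs_of_nonneg (Real.log_nonneg h1)]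
    have := Real.log_le_sub_one_of_pos ht
    nlinarith
  · rw [abs_of_nonpos (Real.log_nonpos ht.le h1.le)]
    have hkey : -Real.log t = 2 * Real.log (t ^ (-(2:ℝ)⁻¹)) := by
      rw [Real.log_rpow ht]; ring
    have := Real.log_le_sub_one_of_pos h2
    nlinarith

lemma Gint : IntegrableOn (fun t => Real.exp (-t) * Real.log t) (Ioi 0) := by
  have hmeas : AEStronglyMeasurable (fun t => Real.exp (-t) * Real.log t)
      (volume.restrict (Ioi 0)) := by
    refine (ContinuousOn.mul ?_ ?_).aestronglyMeasurable measurableSet_Ioi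
    · exact (Real.continuous_exp.comp continuous_neg).continuousOn
    · exact Real.continuousOn_log.mono (fun t ht => ne_of_gt ht)
  have hint : IntegrableOn
      (fun t => Real.exp (-t) * t ^ ((2:ℝ) - 1) + 2 * (Real.exp (-t) * t ^ ((2:ℝ)⁻¹ - 1)))
      (Ioi 0) := by
    exact (Real.GammaIntegral_convergent two_pos).add
      ((Real.GammaIntegral_convergent (by norm_num)).const_mul 2)
  refine Integrable.mono' hint hmeas ?_
  filter_upwards [ae_restrict_mem measurableSet_Ioi] with t ht
  have ht0 : (0:ℝ) < t := ht
  rw [Real.norm_eq_abs, abs_mul, abs_of_nonneg (Real.exp_pos _).le]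
  have hb := abs_log_le ht0
  have hexp := (Real.exp_pos (-t)).le
  have h1 : Real.exp (-t) * |Real.log t| ≤ Real.exp (-t) * (t + 2 * t ^ (-(2:ℝ)⁻¹)) :=
    mul_le_mul_of_nonneg_left hb hexp
  refine h1.trans (le_of_eq ?_)
  have e1 : t ^ ((2:ℝ) - 1) = t := by
    norm_num
  have e2 : t ^ ((2:ℝ)⁻¹ - 1) = t ^ (-(2:ℝ)⁻¹) := by
    norm_num
  rw [e1, e2]; ring

lemma Glog : ∫ t in Ioi (0:ℝ), Real.exp (-t) * Real.log t = -γ := by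
  have h1 := Complex.hasDerivAt_GammaIntegral (s := 1) (by norm_num)
  have hc : (∫ t in Ioi (0:ℝ), (t:ℂ) ^ ((1:ℂ) - 1) * ((Real.log t : ℂ) * (Real.exp (-t) : ℂ)))
      = ((∫ t in Ioi (0:ℝ), Real.exp (-t) * Real.log t : ℝ) : ℂ) := by
    have hcongr : (∫ t in Ioi (0:ℝ), (t:ℂ) ^ ((1:ℂ) - 1) * ((Real.log t : ℂ) * (Real.exp (-t) : ℂ)))
        = ∫ t in Ioi (0:ℝ), ((Real.exp (-t) * Real.log t : ℝ) : ℂ) := by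
      refine setIntegral_congr_fun measurableSet_Ioi (fun t ht => ?_)
      simp only [sub_self, Complex.cpow_zero, one_mul]
      push_cast
      ring
    rw [hcongr]
    exact integral_ofReal
  rw [hc] at h1
  have heq : Complex.Gamma =ᶠ[nhds (1:ℂ)] Complex.GammaIntegral := by
    filter_upwards [(isOpen_lt continuous_const Complex.continuous_re).mem_nhds
      (by norm_num : (0:ℝ) < (1:ℂ).re)] with s hs
    exact Complex.Gamma_eq_integral hs
  have h3 : HasDerivAt Complex.Gamma
      ((∫ t in Ioi (0:ℝ), Real.exp (-t) * Real.log t : ℝ) : ℂ) 1 :=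
    h1.congr_of_eventuallyEq heq
  have h4 : HasDerivAt (fun y : ℝ => Complex.Gamma (y : ℂ))
      ((∫ t in Ioi (0:ℝ), Real.exp (-t) * Real.log t : ℝ) : ℂ) 1 := h3.comp_ofReal
  have h5 : HasDerivAt (fun y : ℝ => Complex.Gamma (y : ℂ)) ((-γ : ℝ) : ℂ) 1 := by
    have := Real.hasDerivAt_Gamma_one.ofReal_comp
    refine this.congr_of_eventuallyEq ?_
    filter_upwards with y
    exact (Complex.Gamma_ofReal y)
  have := h4.unique h5
  exact_mod_cast this

lemma GintA {a : ℝ} (ha : 0 < a) :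
    IntegrableOn (fun t => Real.exp (-t) * Real.log t) (Ioi a) :=
  Gint.mono_set (Ioi_subset_Ioi ha.le)

lemma IBP {a : ℝ} (ha : 0 < a) :
    E a = (∫ t in Ioi a, Real.exp (-t) * Real.log t) - Real.exp (-a) * Real.log a := by
  have key : ∫ t in Ioi a, (Real.exp (-t) * Real.log t - Real.exp (-t) / t)
      = 0 - (-(Real.exp (-a) * Real.log a)) := by
    refine integral_Ioi_of_hasDerivAt_of_tendsto'
      (f := fun t => -(Real.exp (-t) * Real.log t)) (fun t htm => ?_)
      ((GintA ha).sub (E_integrableOn ha)) ?_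
    · have ht0 : 0 < t := lt_of_lt_of_le ha htm
      have hexp : HasDerivAt (fun t : ℝ => Real.exp (-t)) (-Real.exp (-t)) t := by
        have h := ((hasDerivAt_id t).neg).exp; rw [mul_neg_one] at h; exact h
      have hlog : HasDerivAt Real.log t⁻¹ t := Real.hasDerivAt_log (ne_of_gt ht0)
      have := (hexp.mul hlog).neg
      convert this using 1
      · rfl
      · rw [div_eq_mul_inv]; ring
    · refine squeeze_zero_norm' (a := fun t => t ^ 1 * Real.exp (-t)) ?_ ?_
      · filter_upwards [eventually_ge_atTop (1:ℝ)] with t ht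
        rw [norm_neg, Real.norm_eq_abs, abs_mul, abs_of_nonneg (Real.exp_pos _).le,
          abs_of_nonneg (Real.log_nonneg ht)]
        have h1 : Real.log t ≤ t := (Real.log_le_sub_one_of_pos (by linarith)).trans (by linarith)
        calc Real.exp (-t) * Real.log t ≤ Real.exp (-t) * t :=
              mul_le_mul_of_nonneg_left h1 (Real.exp_pos _).le
          _ = t ^ 1 * Real.exp (-t) := by ring
      · simpa using Real.tendsto_pow_mul_exp_neg_atTop_nhds_zero 1
  rw [integral_sub (GintA ha) (E_integrableOn ha)] at key
  unfold E
  linarith [key]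

lemma G_tendsto :
    Tendsto (fun a => ∫ t in Ioi a, Real.exp (-t) * Real.log t) (𝓝[>] (0:ℝ)) (𝓝 (-γ)) := by
  rw [← Glog]
  have hii : IntervalIntegrable (fun t => Real.exp (-t) * Real.log t) volume
      ((0:ℝ) ⊓ 0) (0 ⊔ 1) := by
    simp only [min_self, max_eq_right (zero_le_one)]
    rw [intervalIntegrable_iff_integrableOn_Ioc_of_le zero_le_one]
    exact Gint.mono_set Ioc_subset_Ioi_self
  have hP : ContinuousWithinAt (fun b => ∫ t in (0:ℝ)..b, Real.exp (-t) * Real.log t)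
      (Icc (0:ℝ) 1) 0 :=
    intervalIntegral.continuousWithinAt_primitive (measure_singleton 0) hii
  have hP0 : (∫ t in (0:ℝ)..(0:ℝ), Real.exp (-t) * Real.log t) = 0 := by simp
  have hPt : Tendsto (fun b => ∫ t in (0:ℝ)..b, Real.exp (-t) * Real.log t)
      (𝓝[>] (0:ℝ)) (𝓝 0) := by
    have hle : 𝓝[>] (0:ℝ) ≤ 𝓝[Icc (0:ℝ) 1] 0 := by
      rw [← nhdsWithin_Ioc_eq_nhdsGT (zero_lt_one (α := ℝ))]
      exact nhdsWithin_mono 0 Ioc_subset_Icc_self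
    have := hP.tendsto.mono_left hle
    rwa [hP0] at this
  have := (tendsto_const_nhds (x := ∫ t in Ioi (0:ℝ), Real.exp (-t) * Real.log t)
    (f := 𝓝[>] (0:ℝ))).sub hPt
  rw [sub_zero] at this
  refine this.congr' ?_
  filter_upwards [self_mem_nhdsWithin] with a ha
  have ha0 : (0:ℝ) < a := ha
  have hsplit : (∫ t in Ioi (0:ℝ), Real.exp (-t) * Real.log t)
      = (∫ t in Ioc 0 a, Real.exp (-t) * Real.log t)
        + ∫ t in Ioi a, Real.exp (-t) * Real.log t := by
    rw [← setIntegral_union (Ioc_disjoint_Ioi le_rfl) measurableSet_Ioi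
      (Gint.mono_set Ioc_subset_Ioi_self) (GintA ha0),
      Ioc_union_Ioi_eq_Ioi ha0.le]
  rw [hsplit, intervalIntegral.integral_of_le ha0.le]
  ring

lemma E_asymp : Tendsto (fun a => E a + Real.log a) (𝓝[>] (0:ℝ)) (𝓝 (-γ)) := by
  have h2 : Tendsto (fun a => (1 - Real.exp (-a)) * Real.log a) (𝓝[>] (0:ℝ)) (𝓝 0) := by
    refine squeeze_zero_norm' (a := fun a => |Real.log a * a|) ?_ ?_
    · filter_upwards [self_mem_nhdsWithin] with a (ha : (0:ℝ) < a)
      have hea : Real.exp (-a) ≤ 1 := Real.exp_le_one_iff.mpr (by linarith)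
      have hea2 : 1 - Real.exp (-a) ≤ a := by
        have := Real.add_one_le_exp (-a); linarith
      rw [Real.norm_eq_abs, abs_mul]
      calc |1 - Real.exp (-a)| * |Real.log a| ≤ a * |Real.log a| := by
            apply mul_le_mul_of_nonneg_right _ (abs_nonneg _)
            rw [abs_of_nonneg (by linarith)]; exact hea2
        _ = |Real.log a * a| := by
            rw [abs_mul, abs_of_nonneg ha.le]; ring
    · have := (tendsto_log_mul_rpow_nhdsGT_zero one_pos)
      have h := this.norm
      simp only [norm_zero] at h
      refine h.congr ?_
      intro a; rw [Real.rpow_one, Real.norm_eq_abs]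
  have := G_tendsto.add h2
  rw [add_zero] at this
  refine this.congr' ?_
  filter_upwards [self_mem_nhdsWithin] with a (ha : (0:ℝ) < a)
  rw [IBP ha]; ring

lemma Z_summable {σ : ℝ} (hσ : 1 < σ) : Summable (fun n : ℕ => 1 / (n : ℝ) ^ σ) :=
  Real.summable_one_div_nat_rpow.mpr hσ

lemma zeta_ofReal {σ : ℝ} (hσ : 1 < σ) : riemannZeta (σ : ℂ) = ((Z σ : ℝ) : ℂ) := by
  rw [zeta_eq_tsum_one_div_nat_cpow (by simpa using hσ), Z, Complex.ofReal_tsum]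
  refine tsum_congr (fun n => ?_)
  rw [Complex.ofReal_div, Complex.ofReal_one, Complex.ofReal_cpow (Nat.cast_nonneg n)]
  norm_cast

lemma one_le_Z {σ : ℝ} (hσ : 1 < σ) : 1 ≤ Z σ := by
  have h1 : (1:ℝ) / (1:ℕ) ^ σ ≤ Z σ :=
    Summable.le_tsum (Z_summable hσ) 1 (fun n _ => by positivity)
  simpa using h1

lemma Z_pos {σ : ℝ} (hσ : 1 < σ) : 0 < Z σ := lt_of_lt_of_le one_pos (one_le_Z hσ)

lemma tail_summable {σ : ℝ} (hσ : 1 < σ) :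
    Summable (fun n : ℕ => 1 / ((n : ℝ) + 2) ^ σ) := by
  have hs1 : Summable (fun n : ℕ => 1 / ((n + 2 : ℕ) : ℝ) ^ σ) :=
    (_root_.summable_nat_add_iff 2).mpr (Z_summable hσ)
  refine hs1.congr (fun n => ?_)
  push_cast
  ring_nf

lemma Z_eq_one_add {σ : ℝ} (hσ : 1 < σ) :
    Z σ = 1 + ∑' n : ℕ, 1 / ((n : ℝ) + 2) ^ σ := by
  have hs := Z_summable hσ
  have hs1 : Summable (fun n : ℕ => 1 / ((n + 1 : ℕ) : ℝ) ^ σ) :=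
    (_root_.summable_nat_add_iff 1).mpr hs
  rw [Z, Summable.tsum_eq_zero_add hs, Summable.tsum_eq_zero_add hs1]
  have h0 : (1:ℝ) / ((0:ℕ):ℝ) ^ σ = 0 := by
    norm_num [Real.zero_rpow (show σ ≠ 0 by linarith)]
  have h1 : (1:ℝ) / ((0 + 1:ℕ):ℝ) ^ σ = 1 := by norm_num
  rw [h0, h1, zero_add]
  congr 1
  refine tsum_congr (fun n => ?_)
  push_cast
  ring_nf

lemma Z_tail_summable : Summable (fun n : ℕ => 1 / ((n : ℝ) + 2) ^ (2:ℝ)) :=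
  tail_summable one_lt_two

lemma Z_le {σ : ℝ} (hσ : 2 ≤ σ) :
    Z σ ≤ 1 + (2:ℝ) ^ ((2:ℝ) - σ) * ∑' n : ℕ, 1 / ((n : ℝ) + 2) ^ (2:ℝ) := by
  rw [Z_eq_one_add (by linarith)]
  have key : ∀ n : ℕ, 1 / ((n : ℝ) + 2) ^ σ
      ≤ (2:ℝ) ^ ((2:ℝ) - σ) * (1 / ((n : ℝ) + 2) ^ (2:ℝ)) := by
    intro n
    have hnpos : (0:ℝ) < (n : ℝ) + 2 := by positivity
    have hn2 : (2:ℝ) ≤ (n : ℝ) + 2 := by linarith [Nat.cast_nonneg (α := ℝ) n]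
    have hge : (2:ℝ) ^ (σ - 2) ≤ ((n : ℝ) + 2) ^ (σ - 2) :=
      Real.rpow_le_rpow (by norm_num) hn2 (by linarith)
    have hmono : ((n:ℝ) + 2) ^ ((2:ℝ) - σ) ≤ (2:ℝ) ^ ((2:ℝ) - σ) := by
      rw [show (2:ℝ) - σ = -(σ - 2) by ring, Real.rpow_neg hnpos.le,
        Real.rpow_neg (by norm_num : (0:ℝ) ≤ 2)]
      exact inv_anti₀ (by positivity) hge
    calc 1 / ((n:ℝ) + 2) ^ σ = ((n:ℝ) + 2) ^ ((2:ℝ) - σ) * (1 / ((n:ℝ) + 2) ^ (2:ℝ)) := by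
          rw [one_div, one_div, ← Real.rpow_neg hnpos.le, ← Real.rpow_neg hnpos.le,
            ← Real.rpow_add hnpos]
          congr 1
          ring
      _ ≤ (2:ℝ) ^ ((2:ℝ) - σ) * (1 / ((n:ℝ) + 2) ^ (2:ℝ)) := by
          apply mul_le_mul_of_nonneg_right hmono (by positivity)
  have hsum := Summable.tsum_le_tsum key (tail_summable (by linarith))
    ((Z_tail_summable.mul_left ((2:ℝ) ^ ((2:ℝ) - σ))))
  rw [tsum_mul_left] at hsum
  linarith

lemma Z_tendsto : Tendsto Z atTop (𝓝 1) := by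
  set K := ∑' n : ℕ, 1 / ((n : ℝ) + 2) ^ (2:ℝ) with hK
  have h0 : Tendsto (fun σ : ℝ => (2:ℝ) ^ ((2:ℝ) - σ)) atTop (𝓝 0) := by
    have he : ∀ σ : ℝ, (2:ℝ) ^ ((2:ℝ) - σ) = Real.exp (Real.log 2 * (2 - σ)) := fun σ =>
      Real.rpow_def_of_pos two_pos _
    simp only [he]
    refine Real.tendsto_exp_atBot.comp ?_
    refine Tendsto.const_mul_atBot (Real.log_pos one_lt_two) ?_
    have : Tendsto (fun σ : ℝ => 2 + -σ) atTop atBot :=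
      tendsto_atBot_add_const_left _ 2 tendsto_neg_atTop_atBot
    refine this.congr (fun σ => by ring)
  have hupper : Tendsto (fun σ : ℝ => 1 + (2:ℝ) ^ ((2:ℝ) - σ) * K) atTop (𝓝 1) := by
    have := (tendsto_const_nhds (x := (1:ℝ)) (f := atTop)).add ((h0.mul_const K))
    simpa using this
  refine tendsto_of_tendsto_of_tendsto_of_le_of_le'
    (tendsto_const_nhds (x := (1:ℝ))) hupper ?_ ?_
  · filter_upwards [eventually_ge_atTop (2:ℝ)] with σ hσ
    exact one_le_Z (by linarith)
  · filter_upwards [eventually_ge_atTop (2:ℝ)] with σ hσ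
    exact Z_le hσ

/-! ### The zeta part -/

lemma zeta_tendsto_one : Tendsto (fun T : ℝ => riemannZeta (T : ℂ)) atTop (𝓝 1) := by
  have h := (Complex.continuous_ofReal.tendsto 1).comp Z_tendsto
  refine h.congr' ?_
  filter_upwards [eventually_gt_atTop (1:ℝ)] with T hT
  exact (zeta_ofReal hT).symm

lemma norm_term_bound {δ : ℝ} (hδ : 0 < δ) {r : ℝ} (hr : 1 + δ ≤ r) (n : ℕ) :
    ‖LSeries.term (fun n => (ArithmeticFunction.vonMangoldt n : ℂ)) (r : ℂ) n‖
      ≤ (2:ℝ) ^ ((1 + δ/2) - r) *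
        ‖LSeries.term (fun n => (ArithmeticFunction.vonMangoldt n : ℂ)) ((1 + δ/2 : ℝ) : ℂ) n‖ := by
  set σ₀ : ℝ := 1 + δ/2 with hσ₀
  rcases Nat.eq_zero_or_pos n with rfl | hn
  · simp
  rcases eq_or_lt_of_le (Nat.one_le_iff_ne_zero.mpr hn.ne') with h1 | h2
  · have h0 : ((ArithmeticFunction.vonMangoldt n : ℝ) : ℂ) = 0 := by
      rw [← h1]; simp [ArithmeticFunction.vonMangoldt_apply_one]
    simp only [LSeries.norm_term_eq, if_neg hn.ne', h0, norm_zero, zero_div]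
    positivity
  · have hn2 : (2:ℝ) ≤ (n:ℝ) := by exact_mod_cast h2
    have hnpos : (0:ℝ) < (n:ℝ) := by linarith
    simp only [LSeries.norm_term_eq, if_neg hn.ne', Complex.ofReal_re]
    have hge : (2:ℝ) ^ (r - σ₀) ≤ (n:ℝ) ^ (r - σ₀) :=
      Real.rpow_le_rpow (by norm_num) hn2 (by simp only [hσ₀]; linarith)
    have hsplit : (n:ℝ) ^ r = (n:ℝ) ^ σ₀ * (n:ℝ) ^ (r - σ₀) := by
      rw [← Real.rpow_add hnpos]; congr 1; ring
    have h2eq : (2:ℝ) ^ (σ₀ - r) = ((2:ℝ) ^ (r - σ₀))⁻¹ := by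
      rw [show σ₀ - r = -(r - σ₀) by ring, Real.rpow_neg (by norm_num)]
    rw [hsplit, h2eq]
    rw [div_le_iff₀ (by positivity)]
    have hp1 : (0:ℝ) < (n:ℝ) ^ σ₀ := by positivity
    have hp2 : (0:ℝ) < (2:ℝ) ^ (r - σ₀) := by positivity
    calc ‖((ArithmeticFunction.vonMangoldt n : ℝ) : ℂ)‖
        = ‖((ArithmeticFunction.vonMangoldt n : ℝ) : ℂ)‖ * 1 := (mul_one _).symm
      _ ≤ ‖((ArithmeticFunction.vonMangoldt n : ℝ) : ℂ)‖ * ((n:ℝ) ^ (r - σ₀) / (2:ℝ) ^ (r - σ₀)) := by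
          apply mul_le_mul_of_nonneg_left _ (norm_nonneg _)
          rw [le_div_iff₀ hp2]
          linarith [hge]
      _ = ((2:ℝ) ^ (r - σ₀))⁻¹ * (‖((ArithmeticFunction.vonMangoldt n : ℝ) : ℂ)‖ / (n:ℝ) ^ σ₀)
            * ((n:ℝ) ^ σ₀ * (n:ℝ) ^ (r - σ₀)) := by
          field_simp

lemma vonMangoldt_summable_norm {σ : ℝ} (hσ : 1 < σ) :
    Summable (fun n =>
      ‖LSeries.term (fun n => (ArithmeticFunction.vonMangoldt n : ℂ)) ((σ : ℝ) : ℂ) n‖) :=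
  summable_norm_iff.mpr (ArithmeticFunction.LSeriesSummable_vonMangoldt (by simpa using hσ))

lemma zeta_logDeriv_norm_le {δ : ℝ} (hδ : 0 < δ) {r : ℝ} (hr : 1 + δ ≤ r) :
    ‖deriv riemannZeta (r : ℂ) / riemannZeta (r : ℂ)‖
      ≤ (2:ℝ) ^ ((1 + δ/2) - r) *
        ∑' n, ‖LSeries.term (fun n => (ArithmeticFunction.vonMangoldt n : ℂ))
          ((1 + δ/2 : ℝ) : ℂ) n‖ := by
  have hr1 : (1:ℝ) < r := by linarith
  have hre : 1 < ((r:ℝ):ℂ).re := by simpa using hr1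
  have heq := ArithmeticFunction.LSeries_vonMangoldt_eq_deriv_riemannZeta_div hre
  have hnorm : ‖deriv riemannZeta (r : ℂ) / riemannZeta (r : ℂ)‖
      = ‖LSeries (fun n => (ArithmeticFunction.vonMangoldt n : ℂ)) (r : ℂ)‖ := by
    rw [heq, neg_div, norm_neg]
  rw [hnorm]
  have hsum_r := vonMangoldt_summable_norm hr1
  calc ‖LSeries (fun n => (ArithmeticFunction.vonMangoldt n : ℂ)) (r : ℂ)‖
      ≤ ∑' n, ‖LSeries.term (fun n => (ArithmeticFunction.vonMangoldt n : ℂ)) (r : ℂ) n‖ :=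
        norm_tsum_le_tsum_norm hsum_r
    _ ≤ ∑' n, (2:ℝ) ^ ((1 + δ/2) - r) *
          ‖LSeries.term (fun n => (ArithmeticFunction.vonMangoldt n : ℂ))
            ((1 + δ/2 : ℝ) : ℂ) n‖ :=
        Summable.tsum_le_tsum (norm_term_bound hδ hr) hsum_r
          ((vonMangoldt_summable_norm (by linarith)).mul_left _)
    _ = _ := tsum_mul_left

set_option maxHeartbeats 1000000 in
lemma zeta_logDeriv_integrable {δ : ℝ} (hδ : 0 < δ) :
    IntegrableOn (fun r : ℝ => deriv riemannZeta (r : ℂ) / riemannZeta (r : ℂ))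
      (Ioi (1 + δ)) := by
  set C : ℝ := ∑' n, ‖LSeries.term (fun n => (ArithmeticFunction.vonMangoldt n : ℂ))
    ((1 + δ/2 : ℝ) : ℂ) n‖ with hC
  have hCnn : 0 ≤ C := tsum_nonneg (fun n => norm_nonneg _)
  have hmeas : AEStronglyMeasurable
      (fun r : ℝ => deriv riemannZeta (r : ℂ) / riemannZeta (r : ℂ))
      (volume.restrict (Ioi (1 + δ))) := by
    have hnum : AEStronglyMeasurable (fun r : ℝ => deriv riemannZeta (r : ℂ))
        (volume.restrict (Ioi (1 + δ))) :=
      (((measurable_deriv riemannZeta).comp Complex.measurable_ofReal)).aestronglyMeasurable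
    have hden : AEStronglyMeasurable (fun r : ℝ => (riemannZeta (r : ℂ))⁻¹)
        (volume.restrict (Ioi (1 + δ))) := by
      refine ContinuousOn.aestronglyMeasurable (ContinuousOn.inv₀ ?_ ?_) measurableSet_Ioi
      · intro r hr
        have hr1 : (1:ℝ) < r := by have : 1 + δ < r := hr; linarith
        have hne : (r : ℂ) ≠ 1 := by
          intro h
          have := congrArg Complex.re h
          simp at this
          linarith
        exact ((differentiableAt_riemannZeta hne).continuousAt.comp
          Complex.continuous_ofReal.continuousAt).continuousWithinAt
      · intro r hr
        have hr1 : (1:ℝ) < r := by have : 1 + δ < r := hr; linarith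
        exact riemannZeta_ne_zero_of_one_lt_re (by simpa using hr1)
    have := hnum.mul hden
    simp only [div_eq_mul_inv]; exact this
  have hint : IntegrableOn
      (fun r : ℝ => ((2:ℝ) ^ ((1:ℝ) + δ/2) * C) * Real.exp (-(Real.log 2) * r))
      (Ioi (1 + δ)) :=
    (exp_neg_integrableOn_Ioi _ (Real.log_pos one_lt_two)).const_mul _
  refine Integrable.mono' hint hmeas ?_
  filter_upwards [ae_restrict_mem measurableSet_Ioi] with r hr
  have hrle : 1 + δ ≤ r := le_of_lt hr
  refine (zeta_logDeriv_norm_le hδ hrle).trans (le_of_eq ?_)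
  have : (2:ℝ) ^ ((1 + δ/2) - r) = (2:ℝ) ^ ((1:ℝ) + δ/2) * Real.exp (-(Real.log 2) * r) := by
    rw [Real.rpow_def_of_pos two_pos, Real.rpow_def_of_pos two_pos]
    rw [← Real.exp_add]
    congr 1
    ring
  rw [this]
  ring

lemma zeta_mem_slitPlane {σ : ℝ} (hσ : 1 < σ) : riemannZeta (σ : ℂ) ∈ Complex.slitPlane := by
  rw [zeta_ofReal hσ]
  exact Complex.ofReal_mem_slitPlane.mpr (Z_pos hσ)

lemma zeta_integral {δ : ℝ} (hδ : 0 < δ) :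
    ∫ r in Ioi (1 + δ), deriv riemannZeta (r : ℂ) / riemannZeta (r : ℂ)
      = -((Real.log (Z (1 + δ)) : ℝ) : ℂ) := by
  have hδ1 : (1:ℝ) < 1 + δ := by linarith
  have key : ∫ r in Ioi (1 + δ), deriv riemannZeta (r : ℂ) / riemannZeta (r : ℂ)
      = 0 - Complex.log (riemannZeta ((1 + δ : ℝ) : ℂ)) := by
    refine integral_Ioi_of_hasDerivAt_of_tendsto'
      (f := fun r : ℝ => Complex.log (riemannZeta (r : ℂ))) (fun r hrm => ?_)
      (zeta_logDeriv_integrable hδ) ?_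
    · have hr1 : (1:ℝ) < r := lt_of_lt_of_le hδ1 hrm
      have hne : (r : ℂ) ≠ 1 := by
        intro h
        have := congrArg Complex.re h
        simp at this
        linarith
      have hz := (differentiableAt_riemannZeta hne).hasDerivAt
      have hlog := Complex.hasDerivAt_log (zeta_mem_slitPlane hr1)
      have hc := (hlog.comp (r : ℂ) hz).comp_ofReal
      refine hc.congr_deriv ?_
      rw [div_eq_inv_mul]
    · have hlogcont : ContinuousAt Complex.log 1 :=
        continuousAt_clog Complex.one_mem_slitPlane
      have := hlogcont.tendsto.comp zeta_tendsto_one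
      simpa [Complex.log_one, Function.comp_def] using this
  rw [key, zero_sub]
  congr 1
  rw [zeta_ofReal hδ1, Complex.ofReal_log (Z_pos hδ1).le]

/-! ### The power part -/

lemma integral_comp_add_right_Ioi (g : ℝ → ℝ) (a c : ℝ) :
    ∫ u in Ioi a, g (u + c) = ∫ u in Ioi (a + c), g u := by
  have A : MeasurableEmbedding (fun u : ℝ => u + c) :=
    (Homeomorph.addRight c).measurableEmbedding
  have hmap : Measure.map (fun u : ℝ => u + c) volume = volume :=
    map_add_right_eq_self volume c
  have hpre : (fun u : ℝ => u + c) ⁻¹' Ioi (a + c) = Ioi a := by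
    ext u
    simp
  calc (∫ u in Ioi a, g (u + c))
      = ∫ x in (fun u : ℝ => u + c) ⁻¹' Ioi (a + c), g (x + c) := by rw [hpre]
    _ = ∫ u in Ioi (a + c), g u ∂(Measure.map (fun u : ℝ => u + c) volume) :=
        (A.setIntegral_map _ _).symm
    _ = ∫ u in Ioi (a + c), g u := by rw [hmap]

lemma pw_eq {x : ℝ} (hx : 1 < x) (r : ℝ) (hr : 1 < r) :
    (x : ℂ) ^ (1 - (r : ℂ)) / (1 - (r : ℂ))
      = ((Real.exp (Real.log x * (1 - r)) / (1 - r) : ℝ) : ℂ) := by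
  have hx0 : (0:ℝ) < x := by linarith
  have h1 : (1 : ℂ) - (r : ℂ) = ((1 - r : ℝ) : ℂ) := by push_cast; ring
  rw [h1, ← Complex.ofReal_cpow hx0.le, Complex.ofReal_div]
  congr 2
  rw [Real.rpow_def_of_pos hx0]

lemma pw_integrableOn {x : ℝ} (hx : 1 < x) {δ : ℝ} (hδ : 0 < δ) :
    IntegrableOn (fun r : ℝ => Real.exp (Real.log x * (1 - r)) / (1 - r)) (Ioi (1 + δ)) := by
  have hL : 0 < Real.log x := Real.log_pos hx
  have hmeas : AEStronglyMeasurable (fun r : ℝ => Real.exp (Real.log x * (1 - r)) / (1 - r))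
      (volume.restrict (Ioi (1 + δ))) := by
    refine (ContinuousOn.div ?_ ?_ ?_).aestronglyMeasurable measurableSet_Ioi
    · exact (Real.continuous_exp.comp (continuous_const.mul
        (continuous_const.sub continuous_id))).continuousOn
    · exact (continuous_const.sub continuous_id).continuousOn
    · intro r hr
      have : 1 + δ < r := hr
      intro h
      have : r = 1 := by linarith [sub_eq_zero.mp h]
      linarith
  have hint : IntegrableOn
      (fun r : ℝ => (δ⁻¹ * Real.exp (Real.log x)) * Real.exp (-(Real.log x) * r))
      (Ioi (1 + δ)) :=
    (exp_neg_integrableOn_Ioi _ hL).const_mul _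
  refine Integrable.mono' hint hmeas ?_
  filter_upwards [ae_restrict_mem measurableSet_Ioi] with r hr
  have hr1 : 1 + δ < r := hr
  have hd : δ ≤ r - 1 := by linarith
  have hrpos : (0:ℝ) < r - 1 := by linarith
  rw [Real.norm_eq_abs, abs_div, abs_of_pos (Real.exp_pos _),
    abs_of_neg (by linarith : 1 - r < 0)]
  have hexp : Real.exp (Real.log x * (1 - r))
      = Real.exp (Real.log x) * Real.exp (-(Real.log x) * r) := by
    rw [← Real.exp_add]; congr 1; ring
  rw [hexp, neg_sub]
  rw [div_le_iff₀ hrpos]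
  have h1 : Real.exp (Real.log x) * Real.exp (-Real.log x * r) * δ
      ≤ Real.exp (Real.log x) * Real.exp (-Real.log x * r) * (r - 1) := by
    apply mul_le_mul_of_nonneg_left hd (by positivity)
  calc Real.exp (Real.log x) * Real.exp (-Real.log x * r)
      = (δ⁻¹ * Real.exp (Real.log x) * Real.exp (-Real.log x * r)) * δ := by
        field_simp
    _ ≤ (δ⁻¹ * Real.exp (Real.log x) * Real.exp (-Real.log x * r)) * δ
          * ((r - 1) / (r - 1)) := by
        rw [div_self hrpos.ne']; ring_nf; exact le_rfl
    _ = δ⁻¹ * (Real.exp (Real.log x) * Real.exp (-Real.log x * r) * δ) * ((r-1) / (r-1)) := by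
        ring
    _ ≤ δ⁻¹ * (Real.exp (Real.log x) * Real.exp (-Real.log x * r) * (r-1)) * ((r-1)/(r-1)) := by
        gcongr
    _ = δ⁻¹ * Real.exp (Real.log x) * Real.exp (-Real.log x * r) * (r - 1) := by
        rw [div_self hrpos.ne']; ring

lemma integral_shift_exp (a c : ℝ) :
    ∫ u in Ioi a, Real.exp (-(u + c)) / (u + c) = ∫ t in Ioi (a + c), Real.exp (-t) / t := by
  simpa using integral_comp_add_right_Ioi (fun t => Real.exp (-t) / t) a c

lemma pw_value {x : ℝ} (hx : 1 < x) {δ : ℝ} (hδ : 0 < δ) :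
    ∫ r in Ioi (1 + δ), Real.exp (Real.log x * (1 - r)) / (1 - r)
      = -(E (Real.log x * δ)) := by
  set L : ℝ := Real.log x with hLdef
  have hL : 0 < L := Real.log_pos hx
  set g : ℝ → ℝ := fun u => -L * (Real.exp (-(u - L)) / (u - L)) with hg
  have hgL : ∀ r : ℝ, 1 < r → g (L * r) = Real.exp (L * (1 - r)) / (1 - r) := by
    intro r hr
    have hrne : r - 1 ≠ 0 := sub_ne_zero.mpr (by linarith)
    have h1r : 1 - r ≠ 0 := sub_ne_zero.mpr (by linarith)
    simp only [hg]
    rw [show L * r - L = L * (r - 1) by ring, show -(L * (r - 1)) = L * (1 - r) by ring]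
    field_simp
    ring
  have hq : IntegrableOn (fun t : ℝ => Real.exp (-t) / t) (Ioi (L * δ)) :=
    E_integrableOn (by positivity)
  calc ∫ r in Ioi (1 + δ), Real.exp (L * (1 - r)) / (1 - r)
      = ∫ r in Ioi (1 + δ), g (L * r) := by
        refine setIntegral_congr_fun measurableSet_Ioi (fun r hr => ?_)
        have : 1 + δ < r := hr
        exact (hgL r (by linarith)).symm
    _ = L⁻¹ • ∫ u in Ioi (L * (1 + δ)), g u := integral_comp_mul_left_Ioi g _ hL
    _ = L⁻¹ • (-L * ∫ u in Ioi (L * (1 + δ)), Real.exp (-(u - L)) / (u - L)) := by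
        rw [integral_const_mul]
    _ = L⁻¹ • (-L * ∫ u in Ioi (L * (1 + δ)), Real.exp (-(u + -L)) / (u + -L)) := by
        have hAB : (∫ u in Ioi (L * (1 + δ)), Real.exp (-(u - L)) / (u - L))
            = ∫ u in Ioi (L * (1 + δ)), Real.exp (-(u + -L)) / (u + -L) :=
          setIntegral_congr_fun measurableSet_Ioi (fun u _ => by rw [sub_eq_add_neg])
        rw [hAB]
    _ = L⁻¹ • (-L * ∫ t in Ioi (L * (1 + δ) + -L), Real.exp (-t) / t) := by
        rw [integral_shift_exp]
    _ = -(E (L * δ)) := by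
        rw [show L * (1 + δ) + -L = L * δ by ring]
        rw [smul_eq_mul, E]
        field_simp

end MainTermAux

open MainTermAux in
theorem integral_main_term (x : ℝ) (hx : 1 < x) :
    Filter.Tendsto
      (fun δ : ℝ =>
        ∫ r in Set.Ioi (1 + δ),
          ((x : ℂ) ^ (1 - (r : ℂ)) / (1 - (r : ℂ))
            - deriv riemannZeta (r : ℂ) / riemannZeta (r : ℂ)))
      (nhdsWithin 0 (Set.Ioi 0))
      (nhds ((Real.log (Real.log x) : ℂ) + (Real.eulerMascheroniConstant : ℂ))) := by
  set L : ℝ := Real.log x with hLdef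
  have hL : 0 < L := Real.log_pos hx
  -- the real-valued limit
  have hreal : Tendsto (fun δ : ℝ => -(E (L * δ)) + Real.log (Z (1 + δ)))
      (𝓝[>] (0:ℝ)) (𝓝 (Real.log L + Real.eulerMascheroniConstant)) := by
    have hmul : Tendsto (fun δ : ℝ => L * δ) (𝓝[>] (0:ℝ)) (𝓝[>] (0:ℝ)) := by
      rw [tendsto_nhdsWithin_iff]
      constructor
      · have hc : Continuous (fun δ : ℝ => L * δ) := by continuity
        have := hc.tendsto (0:ℝ)
        simp only [mul_zero] at this
        exact this.mono_left nhdsWithin_le_nhds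
      · filter_upwards [self_mem_nhdsWithin] with δ (hδ : (0:ℝ) < δ)
        exact mul_pos hL hδ
    have h1 : Tendsto (fun δ : ℝ => E (L * δ) + Real.log (L * δ)) (𝓝[>] (0:ℝ))
        (𝓝 (-Real.eulerMascheroniConstant)) := E_asymp.comp hmul
    have hres : Tendsto (fun δ : ℝ => Real.log δ + Real.log (Z (1 + δ))) (𝓝[>] (0:ℝ))
        (𝓝 0) := by
      have hmap : Tendsto (fun δ : ℝ => ((1 + δ : ℝ) : ℂ)) (𝓝[>] (0:ℝ)) (𝓝[≠] (1:ℂ)) := by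
        rw [tendsto_nhdsWithin_iff]
        constructor
        · have hc : Continuous (fun δ : ℝ => ((1 + δ : ℝ) : ℂ)) := by continuity
          have : Tendsto (fun δ : ℝ => ((1 + δ : ℝ) : ℂ)) (𝓝 (0:ℝ)) (𝓝 1) := by
            have := hc.tendsto (0:ℝ)
            simpa using this
          exact this.mono_left nhdsWithin_le_nhds
        · filter_upwards [self_mem_nhdsWithin] with δ (hδ : (0:ℝ) < δ)
          intro h
          rw [Set.mem_singleton_iff] at h
          have := congrArg Complex.re h
          simp at this
          linarith
      have hcomp := riemannZeta_residue_one.comp hmap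
      have hZform : Tendsto (fun δ : ℝ => δ * Z (1 + δ)) (𝓝[>] (0:ℝ)) (𝓝 1) := by
        have hre := (Complex.continuous_re.tendsto (1:ℂ)).comp hcomp
        simp only [Complex.one_re] at hre
        refine hre.congr' ?_
        filter_upwards [self_mem_nhdsWithin] with δ (hδ : (0:ℝ) < δ)
        have h1δ : (1:ℝ) < 1 + δ := by linarith
        show ((((1 + δ : ℝ) : ℂ) - 1) * riemannZeta ((1 + δ : ℝ) : ℂ)).re = δ * Z (1 + δ)
        rw [zeta_ofReal h1δ]
        rw [show (((1 + δ : ℝ) : ℂ) - 1) = ((δ : ℝ) : ℂ) by push_cast; ring]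
        rw [← Complex.ofReal_mul, Complex.ofReal_re]
      have hlog := ((Real.continuousAt_log one_ne_zero).tendsto).comp hZform
      rw [Real.log_one] at hlog
      refine hlog.congr' ?_
      filter_upwards [self_mem_nhdsWithin] with δ (hδ : (0:ℝ) < δ)
      show Real.log (δ * Z (1 + δ)) = Real.log δ + Real.log (Z (1 + δ))
      exact Real.log_mul hδ.ne' (Z_pos (by linarith)).ne'
    have hcomb := ((h1.neg.add hres).add_const (Real.log L))
    rw [show - -Real.eulerMascheroniConstant + 0 + Real.log L
      = Real.log L + Real.eulerMascheroniConstant by ring] at hcomb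
    refine hcomb.congr' ?_
    filter_upwards [self_mem_nhdsWithin] with δ (hδ : (0:ℝ) < δ)
    rw [Real.log_mul hL.ne' hδ.ne']
    ring
  -- pass to ℂ
  have hofReal := (Complex.continuous_ofReal.tendsto _).comp hreal
  refine hofReal.congr' ?_ |>.mono_right (le_of_eq ?_)
  · filter_upwards [self_mem_nhdsWithin] with δ (hδ : (0:ℝ) < δ)
    have h1δ : (1:ℝ) < 1 + δ := by linarith
    show ((-(E (L * δ)) + Real.log (Z (1 + δ)) : ℝ) : ℂ)
      = ∫ r in Set.Ioi (1 + δ),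
        ((x : ℂ) ^ (1 - (r : ℂ)) / (1 - (r : ℂ))
          - deriv riemannZeta (r : ℂ) / riemannZeta (r : ℂ))
    have hsplit : ∫ r in Set.Ioi (1 + δ),
        ((x : ℂ) ^ (1 - (r : ℂ)) / (1 - (r : ℂ))
          - deriv riemannZeta (r : ℂ) / riemannZeta (r : ℂ))
        = (∫ r in Set.Ioi (1 + δ), ((Real.exp (L * (1 - r)) / (1 - r) : ℝ) : ℂ))
          - ∫ r in Set.Ioi (1 + δ), deriv riemannZeta (r : ℂ) / riemannZeta (r : ℂ) := by
      have hφC : IntegrableOn (fun r : ℝ => ((Real.exp (L * (1 - r)) / (1 - r) : ℝ) : ℂ))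
          (Ioi (1 + δ)) := (pw_integrableOn hx hδ).ofReal
      rw [← integral_sub hφC (zeta_logDeriv_integrable hδ)]
      refine setIntegral_congr_fun measurableSet_Ioi (fun r hr => ?_)
      have : 1 + δ < r := hr
      rw [pw_eq hx r (by linarith)]
    rw [hsplit]
    have hpw : (∫ r in Set.Ioi (1 + δ), ((Real.exp (L * (1 - r)) / (1 - r) : ℝ) : ℂ))
        = ((-(E (L * δ)) : ℝ) : ℂ) := by
      have h2 : (∫ r in Set.Ioi (1 + δ), ((Real.exp (L * (1 - r)) / (1 - r) : ℝ) : ℂ))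
          = ((∫ r in Set.Ioi (1 + δ), Real.exp (L * (1 - r)) / (1 - r) : ℝ) : ℂ) :=
        integral_ofReal
      rw [h2, pw_value hx hδ]
    rw [hpw, zeta_integral hδ]
    push_cast
    ring
  · push_cast
    rfl
end

section
/- Let x and y be real numbers with e < x − y and 0 < y < x. Then π_M(x−y) − log log(x−y) − M ≤ ( π_M(x) − log log(x) − M ) + y/( (x−y)·log(x−y) ). In particular, if π_M(x) − log log x − M < −0.000154/(√x · log x) and 0 < y ≤ 0.00015·√x (with x large enough that log x > 200), then π_M(x−y) − log log(x−y) − M < 0. -/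
open scoped BigOperators

/-- The Mertens constant `M = C₀ - ∑_p ∑_{m≥2} 1/(m p^m)`. -/
noncomputable def mertensConstant : ℝ :=
  Real.eulerMascheroniConstant -
    ∑' p : Nat.Primes, ∑' m : ℕ, 1 / ((m + 2 : ℝ) * ((p : ℕ) : ℝ) ^ (m + 2))

/-- `π_M(x) = ∑'_{p<x} 1/p`, the normalized Mertens prime-counting function
(boundary terms receive weight 1/2). -/
noncomputable def piM (x : ℝ) : ℝ :=
  (1/2) * ∑' p : Nat.Primes, (if ((p : ℕ) : ℝ) < x then 1 / ((p : ℕ) : ℝ) else 0)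
  + (1/2) * ∑' p : Nat.Primes, (if ((p : ℕ) : ℝ) ≤ x then 1 / ((p : ℕ) : ℝ) else 0)

lemma summable_lt_ind (x : ℝ) :
    Summable (fun p : Nat.Primes => if ((p : ℕ) : ℝ) < x then 1 / ((p : ℕ) : ℝ) else 0) := by
  refine summable_of_ne_finset_zero (s := (Finset.range ⌈x⌉₊).subtype Nat.Prime) ?_
  intro p hp
  rw [if_neg]
  intro h
  apply hp
  refine Finset.mem_subtype.mpr ?_
  rw [Finset.mem_range]
  have : ((p : ℕ) : ℝ) < (⌈x⌉₊ : ℝ) := lt_of_lt_of_le h (Nat.le_ceil x)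
  exact_mod_cast this

lemma summable_le_ind (x : ℝ) :
    Summable (fun p : Nat.Primes => if ((p : ℕ) : ℝ) ≤ x then 1 / ((p : ℕ) : ℝ) else 0) := by
  refine summable_of_ne_finset_zero (s := (Finset.range (⌈x⌉₊ + 1)).subtype Nat.Prime) ?_
  intro p hp
  rw [if_neg]
  intro h
  apply hp
  refine Finset.mem_subtype.mpr ?_
  rw [Finset.mem_range]
  have : ((p : ℕ) : ℝ) ≤ (⌈x⌉₊ : ℝ) := le_trans h (Nat.le_ceil x)
  have : (p : ℕ) ≤ ⌈x⌉₊ := by exact_mod_cast this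
  omega

lemma piM_mono : Monotone piM := by
  intro a b hab
  unfold piM
  have h1 : ∀ p : Nat.Primes,
      (if ((p : ℕ) : ℝ) < a then 1 / ((p : ℕ) : ℝ) else 0)
        ≤ (if ((p : ℕ) : ℝ) < b then 1 / ((p : ℕ) : ℝ) else 0) := by
    intro p
    split_ifs with h h' h'
    · exact le_refl _
    · exact absurd (lt_of_lt_of_le h hab) h'
    · positivity
    · exact le_refl _
  have h2 : ∀ p : Nat.Primes,
      (if ((p : ℕ) : ℝ) ≤ a then 1 / ((p : ℕ) : ℝ) else 0)
        ≤ (if ((p : ℕ) : ℝ) ≤ b then 1 / ((p : ℕ) : ℝ) else 0) := by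
    intro p
    split_ifs with h h' h'
    · exact le_refl _
    · exact absurd (le_trans h hab) h'
    · positivity
    · exact le_refl _
  have t1 := Summable.tsum_le_tsum h1 (summable_lt_ind a) (summable_lt_ind b)
  have t2 := Summable.tsum_le_tsum h2 (summable_le_ind a) (summable_le_ind b)
  linarith

lemma log_sub_log_le (a b : ℝ) (hb : 0 < b) (hba : b ≤ a) :
    Real.log a - Real.log b ≤ (a - b) / b := by
  have ha : 0 < a := lt_of_lt_of_le hb hba
  rw [← Real.log_div (ne_of_gt ha) (ne_of_gt hb)]
  have := Real.log_le_sub_one_of_pos (show (0:ℝ) < a / b by positivity)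
  have heq : a / b - 1 = (a - b) / b := by field_simp
  linarith

theorem negativity_propagates
    (x y : ℝ) (hxy : Real.exp 1 < x - y) (hy0 : 0 < y) (hyx : y < x) :
    (piM (x - y) - Real.log (Real.log (x - y)) - mertensConstant
        ≤ (piM x - Real.log (Real.log x) - mertensConstant)
          + y / ((x - y) * Real.log (x - y)))
    ∧ (200 < Real.log x →
        piM x - Real.log (Real.log x) - mertensConstant
          < -0.000154 / (Real.sqrt x * Real.log x) →
        y ≤ 0.00015 * Real.sqrt x →
        piM (x - y) - Real.log (Real.log (x - y)) - mertensConstant < 0) := by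
  have hxy0 : 0 < x - y := lt_trans (Real.exp_pos 1) hxy
  have hx0 : 0 < x := by linarith
  have hlog1 : 1 < Real.log (x - y) := (Real.lt_log_iff_exp_lt hxy0).mpr hxy
  have hlogmono : Real.log (x - y) ≤ Real.log x := Real.log_le_log hxy0 (by linarith)
  -- step 1 : log x - log (x-y) ≤ y/(x-y)
  have step1 : Real.log x - Real.log (x - y) ≤ y / (x - y) := by
    have := log_sub_log_le x (x - y) hxy0 (by linarith)
    simpa using this
  -- step 2 : log log x - log log (x-y) ≤ (y/(x-y))/log(x-y)
  have step2 : Real.log (Real.log x) - Real.log (Real.log (x - y))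
      ≤ y / ((x - y) * Real.log (x - y)) := by
    have h := log_sub_log_le (Real.log x) (Real.log (x - y)) (by linarith) hlogmono
    have h2 : (Real.log x - Real.log (x - y)) / Real.log (x - y)
        ≤ (y / (x - y)) / Real.log (x - y) :=
      div_le_div_of_nonneg_right step1 (by linarith) |>.trans_eq rfl
    have h3 : (y / (x - y)) / Real.log (x - y) = y / ((x - y) * Real.log (x - y)) := by
      rw [div_div]
    linarith [h.trans (h3 ▸ h2)]
  have hpm : piM (x - y) ≤ piM x := piM_mono (by linarith)
  have part1 : piM (x - y) - Real.log (Real.log (x - y)) - mertensConstant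
      ≤ (piM x - Real.log (Real.log x) - mertensConstant)
        + y / ((x - y) * Real.log (x - y)) := by linarith
  refine ⟨part1, fun h200 hneg hy => ?_⟩
  -- quantitative bound
  have hxe : Real.exp 200 < x := (Real.lt_log_iff_exp_lt hx0).mp h200
  have hexp100 : (101 : ℝ) ≤ Real.exp 100 := by
    have := Real.add_one_le_exp (100 : ℝ)
    linarith
  have hxlarge : (10201 : ℝ) < x := by
    have : Real.exp 200 = Real.exp 100 * Real.exp 100 := by
      rw [← Real.exp_add]; norm_num
    nlinarith
  have hsqx : (101 : ℝ) ≤ Real.sqrt x := by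
    rw [show (101:ℝ) = Real.sqrt (101^2) by
      rw [Real.sqrt_sq]; norm_num]
    exact Real.sqrt_le_sqrt (by nlinarith)
  have hsqsq : Real.sqrt x * Real.sqrt x = x := Real.mul_self_sqrt (le_of_lt hx0)
  have hsq_pos : 0 < Real.sqrt x := by linarith
  have hy001 : y ≤ 0.01 * x := by nlinarith
  have hx_y : 0.99 * x ≤ x - y := by linarith
  have hlogxy1 : Real.log x - 1 ≤ Real.log (x - y) := by
    have : y / (x - y) ≤ 1 := by
      rw [div_le_one hxy0]; linarith
    linarith
  have hloglb : 0.995 * Real.log x ≤ Real.log (x - y) := by linarith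
  have hlogx0 : (0:ℝ) < Real.log x := by linarith
  have hbound : y / ((x - y) * Real.log (x - y))
      ≤ 0.000154 / (Real.sqrt x * Real.log x) := by
    rw [div_le_div_iff₀ (by positivity) (by positivity)]
    have hA : 0.99 * x * (0.995 * Real.log x) ≤ (x - y) * Real.log (x - y) :=
      mul_le_mul hx_y hloglb (by positivity) (by linarith)
    have hB : y * (Real.sqrt x * Real.log x)
        ≤ 0.00015 * Real.sqrt x * (Real.sqrt x * Real.log x) :=
      mul_le_mul_of_nonneg_right hy (by positivity)
    nlinarith [mul_pos hx0 hlogx0]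
  have hfinal : (-0.000154) / (Real.sqrt x * Real.log x)
      + 0.000154 / (Real.sqrt x * Real.log x) = 0 := by
    field_simp
    ring
  linarith
end
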